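/- arXiv:1601.06263 — 5 statements merged into one kernel-verified Lean document; each statement's English description precedes it below -/
import Mathlib

section
/- Let l ∈ L²(Q,ℝⁿ) on the unit square Q and m>0. Then ∫₀¹∫₀¹ e^{-m(x+y)} (∫₀ˣ∫₀ʸ |l(s,t)|² ds dt) dx dy ≤ (4/m²) ∫₀¹∫₀¹ e^{-m(s+t)} |l(s,t)|² ds dt. -/
open MeasureTheory Set Real
open scoped ENNReal NNReal

/-- The unit square `Q = [0,1] × [0,1]`. -/
def Q : Set (ℝ × ℝ) := Icc (0:ℝ) 1 ×ˢ Icc (0:ℝ) 1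

lemma exp_int (m t : ℝ) (hm : 0 < m) :
    ∫ y in t..1, Real.exp (-m * y) = (Real.exp (-m*t) - Real.exp (-m)) / m := by
  have hm' : m ≠ 0 := ne_of_gt hm
  rw [intervalIntegral.integral_comp_mul_left (fun x => Real.exp x) (by linarith : (-m) ≠ 0)]
  rw [integral_exp, smul_eq_mul, eq_div_iff hm', mul_one]
  field_simp
  ring

lemma L1 {m : ℝ} (hm : 0 < m) {h : ℝ → ℝ≥0∞} (hh : Measurable h) :
    (∫⁻ y in Ioc (0:ℝ) 1, ENNReal.ofReal (Real.exp (-m*y)) * ∫⁻ t in Ioc (0:ℝ) y, h t) ≤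
    ENNReal.ofReal (1/m) * ∫⁻ t in Ioc (0:ℝ) 1, ENNReal.ofReal (Real.exp (-m*t)) * h t := by
  set I : Set ℝ := Ioc (0:ℝ) 1 with hI
  set G : ℝ × ℝ → ℝ≥0∞ :=
    fun p => {q : ℝ × ℝ | q.2 ≤ q.1}.indicator
      (fun q => ENNReal.ofReal (Real.exp (-m * q.1)) * h q.2) p with hG
  have hGm : Measurable G := by
    apply Measurable.indicator
    · exact ((measurable_fst.const_mul (-m)).exp.ennreal_ofReal).mul (hh.comp measurable_snd)
    · exact measurableSet_le measurable_snd measurable_fst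
  have step1 : (∫⁻ y in I, ENNReal.ofReal (Real.exp (-m*y)) * ∫⁻ t in Ioc (0:ℝ) y, h t)
      = ∫⁻ y in I, ∫⁻ t in I, G (y, t) := by
    apply setLIntegral_congr_fun measurableSet_Ioc
    intro y hy
    have : ∀ t : ℝ, G (y, t) = (Iic y).indicator (fun t => ENNReal.ofReal (Real.exp (-m * y)) * h t) t := by
      intro t
      by_cases ht : t ≤ y <;> simp [hG, Set.indicator, ht]
    simp_rw [this]
    rw [lintegral_indicator measurableSet_Iic, Measure.restrict_restrict measurableSet_Iic]
    have hset : Iic y ∩ I = Ioc (0:ℝ) y := by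
      ext t; simp only [hI, mem_inter_iff, mem_Iic, mem_Ioc]
      exact ⟨fun h => ⟨h.2.1, h.1⟩, fun h => ⟨h.2, h.1, h.2.trans hy.2⟩⟩
    rw [hset, lintegral_const_mul' _ _ ENNReal.ofReal_ne_top]
  have swap : (∫⁻ y in I, ∫⁻ t in I, G (y, t)) = ∫⁻ t in I, ∫⁻ y in I, G (y, t) := by
    exact lintegral_lintegral_swap (f := fun y t => G (y, t))
      (by exact hGm.aemeasurable)
  have step2 : (∫⁻ t in I, ∫⁻ y in I, G (y, t))
      ≤ ∫⁻ t in I, ENNReal.ofReal (1/m) * (ENNReal.ofReal (Real.exp (-m*t)) * h t) := by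
    apply setLIntegral_mono' measurableSet_Ioc
    intro t ht
    have : ∀ y : ℝ, G (y, t) = (Ici t).indicator (fun y => ENNReal.ofReal (Real.exp (-m * y)) * h t) y := by
      intro y
      by_cases hty : t ≤ y <;> simp [hG, Set.indicator, hty]
    simp_rw [this]
    rw [lintegral_indicator measurableSet_Ici, Measure.restrict_restrict measurableSet_Ici]
    have hset : Ici t ∩ I = Icc t 1 := by
      ext y; simp only [hI, mem_inter_iff, mem_Ici, mem_Ioc, mem_Icc]
      exact ⟨fun h => ⟨h.1, h.2.2⟩, fun h => ⟨h.1, lt_of_lt_of_le ht.1 h.1, h.2⟩⟩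
    rw [hset, lintegral_mul_const'' _ ((by fun_prop : Measurable fun y : ℝ => ENNReal.ofReal (Real.exp (-m*y))).aemeasurable)]
    have hcont : Continuous fun y : ℝ => Real.exp (-m * y) := by continuity
    have hC : (∫⁻ y in Icc t 1, ENNReal.ofReal (Real.exp (-m * y)))
        = ENNReal.ofReal (∫ y in Icc t 1, Real.exp (-m * y)) := by
      rw [ofReal_integral_eq_lintegral_ofReal (hcont.integrableOn_Icc)
        (Filter.Eventually.of_forall fun y => (Real.exp_pos _).le)]
    have hval : (∫ y in Icc t 1, Real.exp (-m * y)) = (Real.exp (-m*t) - Real.exp (-m)) / m := by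
      rw [integral_Icc_eq_integral_Ioc, ← intervalIntegral.integral_of_le ht.2, exp_int m t hm]
    have hle : (∫⁻ y in Icc t 1, ENNReal.ofReal (Real.exp (-m * y)))
        ≤ ENNReal.ofReal (1/m) * ENNReal.ofReal (Real.exp (-m*t)) := by
      rw [hC, hval, ← ENNReal.ofReal_mul (by positivity)]
      apply ENNReal.ofReal_le_ofReal
      rw [div_eq_mul_inv, one_div, mul_comm m⁻¹]
      exact mul_le_mul_of_nonneg_right (by linarith [(Real.exp_pos (-m)).le])
        (inv_nonneg.mpr hm.le)
    calc (∫⁻ y in Icc t 1, ENNReal.ofReal (Real.exp (-m * y))) * h t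
        ≤ (ENNReal.ofReal (1/m) * ENNReal.ofReal (Real.exp (-m*t))) * h t :=
          mul_le_mul_left hle _
      _ = ENNReal.ofReal (1/m) * (ENNReal.ofReal (Real.exp (-m*t)) * h t) := mul_assoc _ _ _
  calc (∫⁻ y in I, ENNReal.ofReal (Real.exp (-m*y)) * ∫⁻ t in Ioc (0:ℝ) y, h t)
      = ∫⁻ t in I, ∫⁻ y in I, G (y, t) := by rw [step1, swap]
    _ ≤ ∫⁻ t in I, ENNReal.ofReal (1/m) * (ENNReal.ofReal (Real.exp (-m*t)) * h t) := step2
    _ = ENNReal.ofReal (1/m) * ∫⁻ t in I, ENNReal.ofReal (Real.exp (-m*t)) * h t :=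
        lintegral_const_mul' _ _ ENNReal.ofReal_ne_top

noncomputable def Kop (F : ℝ → ℝ → ℝ≥0∞) : ℝ × ℝ → ℝ≥0∞ := fun q =>
  ∫⁻ u, {r : (ℝ × ℝ) × ℝ | r.2 ≤ r.1.1}.indicator (fun r => F r.2 r.1.2) (q, u)
    ∂(volume.restrict (Ioc (0:ℝ) 1))

lemma Kop_meas {F : ℝ → ℝ → ℝ≥0∞} (hF : Measurable (Function.uncurry F)) :
    Measurable (Kop F) := by
  apply Measurable.lintegral_prod_right
    (f := fun q u => {r : (ℝ × ℝ) × ℝ | r.2 ≤ r.1.1}.indicator (fun r => F r.2 r.1.2) (q, u))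
  have hset : MeasurableSet {r : (ℝ × ℝ) × ℝ | r.2 ≤ r.1.1} :=
    measurableSet_le measurable_snd (measurable_fst.comp measurable_fst)
  exact Measurable.indicator
    (hF.comp (measurable_snd.prodMk (measurable_snd.comp measurable_fst))) hset

lemma Kop_eq {F : ℝ → ℝ → ℝ≥0∞} (x y : ℝ) (hx : x ≤ 1) :
    Kop F (x, y) = ∫⁻ u in Ioc (0:ℝ) x, F u y := by
  have h1 : ∀ u : ℝ, {r : (ℝ × ℝ) × ℝ | r.2 ≤ r.1.1}.indicator (fun r => F r.2 r.1.2) ((x, y), u)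
      = (Iic x).indicator (fun u => F u y) u := by
    intro u; by_cases hu : u ≤ x <;> simp [Set.indicator, hu]
  have h2 : Kop F (x, y) = ∫⁻ u, (Iic x).indicator (fun u => F u y) u
      ∂(volume.restrict (Ioc (0:ℝ) 1)) := lintegral_congr h1
  have hset2 : Iic x ∩ Ioc (0:ℝ) 1 = Ioc (0:ℝ) x := by
    ext u; simp only [mem_inter_iff, mem_Iic, mem_Ioc]
    exact ⟨fun h => ⟨h.2.1, h.1⟩, fun h => ⟨h.2, h.1, h.2.trans hx⟩⟩
  rw [h2, lintegral_indicator measurableSet_Iic, Measure.restrict_restrict measurableSet_Iic,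
    hset2]

/-- Key integration-by-parts inequality (3.5): for `l ∈ L²(Q,ℝⁿ)` and `m > 0`,
`∫₀¹∫₀¹ e^{-m(x+y)} (∫₀ˣ∫₀ʸ |l|²) dx dy ≤ (4/m²) ∫₀¹∫₀¹ e^{-m(s+t)} |l(s,t)|² ds dt`. -/
theorem weighted_primitive_estimate {n : ℕ} (m : ℝ) (hm : 0 < m)
    (l : ℝ → ℝ → EuclideanSpace ℝ (Fin n))
    (hl : MemLp (fun p : ℝ × ℝ => l p.1 p.2) 2 (volume.restrict Q)) :
    (∫ x in (0:ℝ)..1, ∫ y in (0:ℝ)..1,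
        Real.exp (-m * (x + y)) * ∫ s in (0:ℝ)..x, ∫ t in (0:ℝ)..y, ‖l s t‖ ^ 2)
      ≤ (4 / m ^ 2) *
        ∫ s in (0:ℝ)..1, ∫ t in (0:ℝ)..1, Real.exp (-m * (s + t)) * ‖l s t‖ ^ 2 := by

  set I : Set ℝ := Ioc (0:ℝ) 1 with hIdef
  set μ : Measure ℝ := volume.restrict I with hμdef
  -- measurable representative
  have hsm := hl.aestronglyMeasurable
  set l' : ℝ × ℝ → EuclideanSpace ℝ (Fin n) := hsm.mk _ with hl'def
  have hl'm : StronglyMeasurable l' := hsm.stronglyMeasurable_mk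
  have hl'meas : Measurable l' := hl'm.measurable
  have hae : (fun p : ℝ × ℝ => l p.1 p.2) =ᵐ[volume.restrict Q] l' := hsm.ae_eq_mk
  set N : ℝ × ℝ → ℝ≥0∞ := fun p => (‖l' p‖₊ : ℝ≥0∞) ^ 2 with hNdef
  have hNmeas : Measurable N := (hl'meas.nnnorm.coe_nnreal_ennreal).pow_const 2
  -- product structure
  have hprod : μ.prod μ = volume.restrict (I ×ˢ I) := by
    rw [hμdef, Measure.prod_restrict]; rfl
  have hsub : I ×ˢ I ⊆ Q := prod_mono Ioc_subset_Icc_self Ioc_subset_Icc_self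
  have hae2 : (fun p : ℝ × ℝ => l p.1 p.2) =ᵐ[μ.prod μ] l' := by
    rw [hprod]
    exact ae_restrict_of_ae_restrict_of_subset hsub hae
  have hslice : ∀ᵐ s ∂μ, ∀ᵐ t ∂μ, l s t = l' (s, t) :=
    Measure.ae_ae_of_ae_prod hae2
  -- finiteness
  have hfin : (∫⁻ p, N p ∂(μ.prod μ)) < ⊤ := by
    have hint := hl.integrable_norm_rpow two_ne_zero ENNReal.ofNat_ne_top
    have hnn : 0 ≤ᵐ[volume.restrict Q] fun p : ℝ × ℝ => ‖l p.1 p.2‖ ^ (2:ℝ≥0∞).toReal :=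
      Filter.Eventually.of_forall fun p => Real.rpow_nonneg (norm_nonneg _) _
    have hfi := (hasFiniteIntegral_iff_ofReal hnn).mp hint.hasFiniteIntegral
    have hcongr : (fun p : ℝ × ℝ => ENNReal.ofReal (‖l p.1 p.2‖ ^ (2:ℝ≥0∞).toReal))
        =ᵐ[volume.restrict Q] N := by
      filter_upwards [hae] with p hp
      rw [hp, hNdef]
      have h2 : ((2:ℝ≥0∞).toReal) = ((2:ℕ):ℝ) := by simp
      rw [h2, Real.rpow_natCast, ENNReal.ofReal_pow (norm_nonneg _), ofReal_norm, enorm_eq_nnnorm]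
    have hQ : (∫⁻ p, N p ∂(volume.restrict Q)) < ⊤ := by
      rw [← lintegral_congr_ae hcongr]; exact hfi
    calc (∫⁻ p, N p ∂(μ.prod μ)) = ∫⁻ p, N p ∂(volume.restrict (I ×ˢ I)) := by rw [hprod]
      _ ≤ ∫⁻ p, N p ∂(volume.restrict Q) :=
          lintegral_mono' (Measure.restrict_mono hsub le_rfl) le_rfl
      _ < ⊤ := hQ
  -- layered ENNReal functions
  set Φ : ℝ → ℝ → ℝ≥0∞ := fun s y => Kop (fun t s' => N (s', t)) (y, s) with hΦdef
  have hΦmeas : Measurable (Function.uncurry Φ) := by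
    have h0 : Measurable (Function.uncurry fun t s' => N (s', t)) :=
      hNmeas.comp measurable_swap
    exact (Kop_meas h0).comp (measurable_snd.prodMk measurable_fst)
  have hΦeq : ∀ s y : ℝ, y ≤ 1 → Φ s y = ∫⁻ t in Ioc (0:ℝ) y, N (s, t) :=
    fun s y hy => Kop_eq y s hy
  set Γ : ℝ → ℝ → ℝ≥0∞ := fun x t => Kop (fun s t' => N (s, t')) (x, t) with hΓdef
  have hΓmeas : Measurable (Function.uncurry Γ) := by
    have h0 : Measurable (Function.uncurry fun s t' => N (s, t')) := hNmeas
    exact (Kop_meas h0).comp (measurable_fst.prodMk measurable_snd)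
  have hΓeq : ∀ x t : ℝ, x ≤ 1 → Γ x t = ∫⁻ s in Ioc (0:ℝ) x, N (s, t) :=
    fun x t hx => Kop_eq x t hx
  set Ψ : ℝ → ℝ → ℝ≥0∞ := fun x y => Kop Φ (x, y) with hΨdef
  have hΨmeas : Measurable (Function.uncurry Ψ) := Kop_meas hΦmeas
  have hΨeq : ∀ x y : ℝ, x ≤ 1 → Ψ x y = ∫⁻ s in Ioc (0:ℝ) x, Φ s y :=
    fun x y hx => Kop_eq x y hx
  -- total mass
  set T : ℝ≥0∞ := ∫⁻ p, N p ∂(μ.prod μ) with hTdef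
  have hT : (∫⁻ s, Φ s 1 ∂μ) = T := by
    rw [hTdef, lintegral_prod N hNmeas.aemeasurable]
    apply lintegral_congr; intro s
    rw [hΦeq s 1 le_rfl]
  have hΦ1meas : Measurable fun s => Φ s 1 :=
    hΦmeas.comp (measurable_id.prodMk measurable_const)
  have hΦ1fin : ∀ᵐ s ∂μ, Φ s 1 < ⊤ := by
    apply ae_lt_top hΦ1meas
    rw [hT]; exact hfin.ne
  have hΦmono : ∀ s : ℝ, ∀ y ∈ Icc (0:ℝ) 1, Φ s y ≤ Φ s 1 := by
    intro s y hy
    rw [hΦeq s y hy.2, hΦeq s 1 le_rfl]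
    exact lintegral_mono_set (Ioc_subset_Ioc_right hy.2)
  -- C1 : slice conversion
  have hC1 : ∀ᵐ s ∂μ, (∀ y : ℝ, 0 ≤ y → y ≤ 1 →
      (∫ t in (0:ℝ)..y, ‖l s t‖ ^ 2) = (Φ s y).toReal) ∧ Φ s 1 < ⊤ := by
    filter_upwards [hslice, hΦ1fin] with s hs hfin1
    refine ⟨fun y hy0 hy1 => ?_, hfin1⟩
    rw [intervalIntegral.integral_of_le hy0]
    have haes : (fun t => ‖l s t‖ ^ 2) =ᵐ[volume.restrict (Ioc (0:ℝ) y)]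
        fun t => ‖l' (s, t)‖ ^ 2 := by
      filter_upwards [ae_restrict_of_ae_restrict_of_subset (Ioc_subset_Ioc_right hy1) hs]
        with t ht
      rw [ht]
    rw [integral_congr_ae haes,
      integral_eq_lintegral_of_nonneg_ae (μ := volume.restrict (Ioc (0:ℝ) y))
        (f := fun t => ‖l' (s, t)‖ ^ 2)
        (Filter.Eventually.of_forall fun t => by positivity)
        (((hl'meas.comp measurable_prodMk_left).norm.pow_const 2).aestronglyMeasurable),
      hΦeq s y hy1]
    congr 1
    apply lintegral_congr; intro t
    rw [ENNReal.ofReal_pow (norm_nonneg _), ofReal_norm, enorm_eq_nnnorm]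
  -- C2
  have hC2 : ∀ x ∈ Icc (0:ℝ) 1, ∀ y ∈ Icc (0:ℝ) 1,
      (∫ s in (0:ℝ)..x, ∫ t in (0:ℝ)..y, ‖l s t‖ ^ 2) = (Ψ x y).toReal := by
    intro x hx y hy
    have hres : ∀ᵐ s ∂(volume.restrict (Ioc (0:ℝ) x)), (∀ y : ℝ, 0 ≤ y → y ≤ 1 →
        (∫ t in (0:ℝ)..y, ‖l s t‖ ^ 2) = (Φ s y).toReal) ∧ Φ s 1 < ⊤ :=
      ae_restrict_of_ae_restrict_of_subset (Ioc_subset_Ioc_right hx.2) hC1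
    rw [intervalIntegral.integral_of_le hx.1]
    have hcg : (fun s => ∫ t in (0:ℝ)..y, ‖l s t‖ ^ 2)
        =ᵐ[volume.restrict (Ioc (0:ℝ) x)] fun s => (Φ s y).toReal := by
      filter_upwards [hres] with s hsp
      exact hsp.1 y hy.1 hy.2
    have hmeas : Measurable fun s => (Φ s y).toReal :=
      ENNReal.measurable_toReal.comp (hΦmeas.comp (measurable_id.prodMk measurable_const))
    rw [integral_congr_ae hcg,
      integral_eq_lintegral_of_nonneg_ae (μ := volume.restrict (Ioc (0:ℝ) x))
        (f := fun s => (Φ s y).toReal)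
        (Filter.Eventually.of_forall fun s => ENNReal.toReal_nonneg)
        hmeas.aestronglyMeasurable,
      hΨeq x y hx.2]
    congr 1
    apply lintegral_congr_ae
    filter_upwards [hres] with s hsp
    exact ENNReal.ofReal_toReal (lt_of_le_of_lt (hΦmono s y hy) hsp.2).ne
  -- Ψ bounded
  have hΨle : ∀ x ∈ Icc (0:ℝ) 1, ∀ y ∈ Icc (0:ℝ) 1, Ψ x y ≤ T := by
    intro x hx y hy
    rw [hΨeq x y hx.2, ← hT]
    calc (∫⁻ s in Ioc (0:ℝ) x, Φ s y) ≤ ∫⁻ s in Ioc (0:ℝ) 1, Φ s y :=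
          lintegral_mono_set (Ioc_subset_Ioc_right hx.2)
      _ ≤ ∫⁻ s in Ioc (0:ℝ) 1, Φ s 1 := lintegral_mono fun s => hΦmono s y hy
      _ = ∫⁻ s, Φ s 1 ∂μ := rfl
  -- Θ
  set Θ : ℝ → ℝ≥0∞ :=
    fun x => ∫⁻ y in Ioc (0:ℝ) 1, ENNReal.ofReal (Real.exp (-m * (x + y))) * Ψ x y with hΘdef
  have hΘmeas : Measurable Θ := by
    apply Measurable.lintegral_prod_right
      (f := fun x y => ENNReal.ofReal (Real.exp (-m * (x + y))) * Ψ x y)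
    apply Measurable.mul
    · exact ((measurable_fst.add measurable_snd).const_mul (-m)).exp.ennreal_ofReal
    · exact hΨmeas
  have hΘle : ∀ x ∈ Icc (0:ℝ) 1, Θ x ≤ T := by
    intro x hx
    rw [hΘdef]
    calc (∫⁻ y in Ioc (0:ℝ) 1, ENNReal.ofReal (Real.exp (-m * (x + y))) * Ψ x y)
        ≤ ∫⁻ y in Ioc (0:ℝ) 1, 1 * T := by
          apply setLIntegral_mono' measurableSet_Ioc
          intro y hy
          apply mul_le_mul'
          · rw [← ENNReal.ofReal_one]
            apply ENNReal.ofReal_le_ofReal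
            apply Real.exp_le_one_iff.mpr
            nlinarith [hx.1, hx.2, hy.1.le, hy.2]
          · exact hΨle x hx y ⟨hy.1.le, hy.2⟩
      _ = T := by
          rw [one_mul, setLIntegral_const, Real.volume_Ioc]
          norm_num
  -- C3
  have hC3 : ∀ x ∈ Icc (0:ℝ) 1,
      (∫ y in (0:ℝ)..1, Real.exp (-m * (x + y)) * ∫ s in (0:ℝ)..x, ∫ t in (0:ℝ)..y, ‖l s t‖ ^ 2)
        = (Θ x).toReal := by
    intro x hx
    rw [intervalIntegral.integral_of_le zero_le_one]
    rw [setIntegral_congr_fun (g := fun y => (ENNReal.ofReal (Real.exp (-m * (x + y))) * Ψ x y).toReal)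
      measurableSet_Ioc (fun y hy => by
        show Real.exp (-m * (x + y)) * (∫ s in (0:ℝ)..x, ∫ t in (0:ℝ)..y, ‖l s t‖ ^ 2)
          = (ENNReal.ofReal (Real.exp (-m * (x + y))) * Ψ x y).toReal
        rw [hC2 x hx y ⟨hy.1.le, hy.2⟩, ENNReal.toReal_mul,
          ENNReal.toReal_ofReal (Real.exp_pos _).le])]
    have hmeas : Measurable fun y => (ENNReal.ofReal (Real.exp (-m * (x + y))) * Ψ x y).toReal := by
      apply ENNReal.measurable_toReal.comp
      apply Measurable.mul
      · exact ((measurable_const.add measurable_id).const_mul (-m)).exp.ennreal_ofReal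
      · exact hΨmeas.comp (measurable_const.prodMk measurable_id)
    rw [integral_eq_lintegral_of_nonneg_ae (μ := volume.restrict (Ioc (0:ℝ) 1))
        (f := fun y => (ENNReal.ofReal (Real.exp (-m * (x + y))) * Ψ x y).toReal)
        (Filter.Eventually.of_forall fun y => ENNReal.toReal_nonneg)
        hmeas.aestronglyMeasurable]
    rw [hΘdef]
    congr 1
    apply setLIntegral_congr_fun measurableSet_Ioc
    intro y hy
    apply ENNReal.ofReal_toReal
    exact ENNReal.mul_ne_top ENNReal.ofReal_ne_top
      (lt_of_le_of_lt (hΨle x hx y ⟨hy.1.le, hy.2⟩) hfin).ne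
  -- C4 : LHS = A.toReal
  set A : ℝ≥0∞ := ∫⁻ x in Ioc (0:ℝ) 1, Θ x with hAdef
  have hC4 : (∫ x in (0:ℝ)..1, ∫ y in (0:ℝ)..1,
      Real.exp (-m * (x + y)) * ∫ s in (0:ℝ)..x, ∫ t in (0:ℝ)..y, ‖l s t‖ ^ 2)
        = A.toReal := by
    rw [intervalIntegral.integral_of_le zero_le_one]
    rw [setIntegral_congr_fun (g := fun x => (Θ x).toReal) measurableSet_Ioc
      (fun x hx => hC3 x ⟨hx.1.le, hx.2⟩)]
    rw [integral_eq_lintegral_of_nonneg_ae (μ := volume.restrict (Ioc (0:ℝ) 1))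
        (f := fun x => (Θ x).toReal)
        (Filter.Eventually.of_forall fun x => ENNReal.toReal_nonneg)
        (ENNReal.measurable_toReal.comp hΘmeas).aestronglyMeasurable]
    rw [hAdef]
    congr 1
    apply setLIntegral_congr_fun measurableSet_Ioc
    intro x hx
    exact ENNReal.ofReal_toReal (lt_of_le_of_lt (hΘle x ⟨hx.1.le, hx.2⟩) hfin).ne
  -- ENNReal chain
  have hsplit : ∀ a b : ℝ, ENNReal.ofReal (Real.exp (-m * (a + b)))
      = ENNReal.ofReal (Real.exp (-m * a)) * ENNReal.ofReal (Real.exp (-m * b)) := by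
    intro a b
    have h : -m * (a + b) = -m * a + -m * b := by ring
    rw [h, Real.exp_add, ENNReal.ofReal_mul (Real.exp_pos _).le]
  have hA1 : ∀ x ∈ Ioc (0:ℝ) 1, Θ x ≤ ENNReal.ofReal (Real.exp (-m * x)) *
      (ENNReal.ofReal (1/m) *
        ∫⁻ t in Ioc (0:ℝ) 1, ENNReal.ofReal (Real.exp (-m * t)) * Γ x t) := by
    intro x hx
    have hΨswap : ∀ y ∈ Ioc (0:ℝ) 1, Ψ x y = ∫⁻ t in Ioc (0:ℝ) y, Γ x t := by
      intro y hy
      rw [hΨeq x y hx.2]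
      calc (∫⁻ s in Ioc (0:ℝ) x, Φ s y)
          = ∫⁻ s in Ioc (0:ℝ) x, ∫⁻ t in Ioc (0:ℝ) y, N (s, t) :=
            lintegral_congr fun s => hΦeq s y hy.2
        _ = ∫⁻ t in Ioc (0:ℝ) y, ∫⁻ s in Ioc (0:ℝ) x, N (s, t) :=
            lintegral_lintegral_swap (f := fun s t => N (s, t)) hNmeas.aemeasurable
        _ = ∫⁻ t in Ioc (0:ℝ) y, Γ x t := lintegral_congr fun t => (hΓeq x t hx.2).symm
    calc Θ x = ∫⁻ y in Ioc (0:ℝ) 1, ENNReal.ofReal (Real.exp (-m * x)) *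
          (ENNReal.ofReal (Real.exp (-m * y)) * Ψ x y) := by
          rw [hΘdef]
          exact lintegral_congr fun y => by rw [hsplit x y, mul_assoc]
      _ = ENNReal.ofReal (Real.exp (-m * x)) *
          ∫⁻ y in Ioc (0:ℝ) 1, ENNReal.ofReal (Real.exp (-m * y)) * Ψ x y :=
          lintegral_const_mul' _ _ ENNReal.ofReal_ne_top
      _ = ENNReal.ofReal (Real.exp (-m * x)) *
          ∫⁻ y in Ioc (0:ℝ) 1, ENNReal.ofReal (Real.exp (-m * y)) *
            ∫⁻ t in Ioc (0:ℝ) y, Γ x t := by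
          congr 1
          apply setLIntegral_congr_fun measurableSet_Ioc
          intro y hy
          simp only [hΨswap y hy]
      _ ≤ _ := mul_le_mul_right
          (L1 hm (h := fun t => Γ x t) (hΓmeas.comp measurable_prodMk_left)) _
  have hA2 : A ≤ ENNReal.ofReal (1/m) * ∫⁻ x in Ioc (0:ℝ) 1, ∫⁻ t in Ioc (0:ℝ) 1,
      ENNReal.ofReal (Real.exp (-m * x)) * (ENNReal.ofReal (Real.exp (-m * t)) * Γ x t) := by
    rw [hAdef, ← lintegral_const_mul' _ _ ENNReal.ofReal_ne_top]
    apply setLIntegral_mono' measurableSet_Ioc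
    intro x hx
    calc Θ x ≤ ENNReal.ofReal (Real.exp (-m * x)) * (ENNReal.ofReal (1/m) *
          ∫⁻ t in Ioc (0:ℝ) 1, ENNReal.ofReal (Real.exp (-m * t)) * Γ x t) := hA1 x hx
      _ = ENNReal.ofReal (1/m) * (ENNReal.ofReal (Real.exp (-m * x)) *
          ∫⁻ t in Ioc (0:ℝ) 1, ENNReal.ofReal (Real.exp (-m * t)) * Γ x t) := by ring
      _ = ENNReal.ofReal (1/m) * ∫⁻ t in Ioc (0:ℝ) 1,
          ENNReal.ofReal (Real.exp (-m * x)) * (ENNReal.ofReal (Real.exp (-m * t)) * Γ x t) := by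
          rw [lintegral_const_mul' _ _ ENNReal.ofReal_ne_top]
  have hswap2 : (∫⁻ x in Ioc (0:ℝ) 1, ∫⁻ t in Ioc (0:ℝ) 1,
      ENNReal.ofReal (Real.exp (-m * x)) * (ENNReal.ofReal (Real.exp (-m * t)) * Γ x t))
      = ∫⁻ t in Ioc (0:ℝ) 1, ∫⁻ x in Ioc (0:ℝ) 1,
      ENNReal.ofReal (Real.exp (-m * x)) * (ENNReal.ofReal (Real.exp (-m * t)) * Γ x t) := by
    apply lintegral_lintegral_swap
    apply Measurable.aemeasurable
    exact ((measurable_fst.const_mul (-m)).exp.ennreal_ofReal).mul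
      (((measurable_snd.const_mul (-m)).exp.ennreal_ofReal).mul hΓmeas)
  have hA3 : ∀ t ∈ Ioc (0:ℝ) 1, (∫⁻ x in Ioc (0:ℝ) 1,
      ENNReal.ofReal (Real.exp (-m * x)) * (ENNReal.ofReal (Real.exp (-m * t)) * Γ x t))
      ≤ ENNReal.ofReal (Real.exp (-m * t)) * (ENNReal.ofReal (1/m) *
        ∫⁻ s in Ioc (0:ℝ) 1, ENNReal.ofReal (Real.exp (-m * s)) * N (s, t)) := by
    intro t ht
    calc (∫⁻ x in Ioc (0:ℝ) 1,
        ENNReal.ofReal (Real.exp (-m * x)) * (ENNReal.ofReal (Real.exp (-m * t)) * Γ x t))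
        = ENNReal.ofReal (Real.exp (-m * t)) * ∫⁻ x in Ioc (0:ℝ) 1,
          ENNReal.ofReal (Real.exp (-m * x)) * Γ x t := by
          rw [← lintegral_const_mul' _ _ ENNReal.ofReal_ne_top]
          exact lintegral_congr fun x => by ring
      _ = ENNReal.ofReal (Real.exp (-m * t)) * ∫⁻ x in Ioc (0:ℝ) 1,
          ENNReal.ofReal (Real.exp (-m * x)) * ∫⁻ s in Ioc (0:ℝ) x, N (s, t) := by
          congr 1
          apply setLIntegral_congr_fun measurableSet_Ioc
          intro x hx
          simp only [hΓeq x t hx.2]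
      _ ≤ _ := mul_le_mul_right
          (L1 hm (h := fun s => N (s, t))
            (hNmeas.comp (measurable_id.prodMk measurable_const))) _
  set B : ℝ≥0∞ := ∫⁻ s in Ioc (0:ℝ) 1, ∫⁻ t in Ioc (0:ℝ) 1,
      ENNReal.ofReal (Real.exp (-m * (s + t))) * N (s, t) with hBdef
  have hABfinal : A ≤ ENNReal.ofReal (1/m) * (ENNReal.ofReal (1/m) * B) := by
    calc A ≤ ENNReal.ofReal (1/m) * ∫⁻ x in Ioc (0:ℝ) 1, ∫⁻ t in Ioc (0:ℝ) 1,
          ENNReal.ofReal (Real.exp (-m * x)) * (ENNReal.ofReal (Real.exp (-m * t)) * Γ x t) := hA2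
      _ = ENNReal.ofReal (1/m) * ∫⁻ t in Ioc (0:ℝ) 1, ∫⁻ x in Ioc (0:ℝ) 1,
          ENNReal.ofReal (Real.exp (-m * x)) * (ENNReal.ofReal (Real.exp (-m * t)) * Γ x t) := by
          rw [hswap2]
      _ ≤ ENNReal.ofReal (1/m) * ∫⁻ t in Ioc (0:ℝ) 1,
          ENNReal.ofReal (Real.exp (-m * t)) * (ENNReal.ofReal (1/m) *
            ∫⁻ s in Ioc (0:ℝ) 1, ENNReal.ofReal (Real.exp (-m * s)) * N (s, t)) :=
          mul_le_mul_right (setLIntegral_mono' measurableSet_Ioc hA3) _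
      _ = ENNReal.ofReal (1/m) * (ENNReal.ofReal (1/m) * ∫⁻ t in Ioc (0:ℝ) 1,
          ENNReal.ofReal (Real.exp (-m * t)) *
            ∫⁻ s in Ioc (0:ℝ) 1, ENNReal.ofReal (Real.exp (-m * s)) * N (s, t)) := by
          congr 1
          rw [← lintegral_const_mul' _ _ ENNReal.ofReal_ne_top]
          exact lintegral_congr fun t => by ring
      _ = ENNReal.ofReal (1/m) * (ENNReal.ofReal (1/m) * B) := by
          congr 2
          calc (∫⁻ t in Ioc (0:ℝ) 1, ENNReal.ofReal (Real.exp (-m * t)) *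
              ∫⁻ s in Ioc (0:ℝ) 1, ENNReal.ofReal (Real.exp (-m * s)) * N (s, t))
              = ∫⁻ t in Ioc (0:ℝ) 1, ∫⁻ s in Ioc (0:ℝ) 1,
                ENNReal.ofReal (Real.exp (-m * t)) *
                  (ENNReal.ofReal (Real.exp (-m * s)) * N (s, t)) :=
                lintegral_congr fun t =>
                  (lintegral_const_mul' _ _ ENNReal.ofReal_ne_top).symm
            _ = ∫⁻ s in Ioc (0:ℝ) 1, ∫⁻ t in Ioc (0:ℝ) 1,
                ENNReal.ofReal (Real.exp (-m * t)) *
                  (ENNReal.ofReal (Real.exp (-m * s)) * N (s, t)) := by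
                apply lintegral_lintegral_swap
                apply Measurable.aemeasurable
                exact ((measurable_fst.const_mul (-m)).exp.ennreal_ofReal).mul
                  (((measurable_snd.const_mul (-m)).exp.ennreal_ofReal).mul
                    (hNmeas.comp (measurable_snd.prodMk measurable_fst)))
            _ = B := by
                rw [hBdef]
                exact lintegral_congr fun s => lintegral_congr fun t => by
                  rw [hsplit s t]; ring
  have hBle : B ≤ T := by
    rw [hBdef]
    calc (∫⁻ s in Ioc (0:ℝ) 1, ∫⁻ t in Ioc (0:ℝ) 1,
        ENNReal.ofReal (Real.exp (-m * (s + t))) * N (s, t))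
        ≤ ∫⁻ s in Ioc (0:ℝ) 1, ∫⁻ t in Ioc (0:ℝ) 1, 1 * N (s, t) := by
          apply setLIntegral_mono' measurableSet_Ioc
          intro s hs
          apply setLIntegral_mono' measurableSet_Ioc
          intro t ht
          apply mul_le_mul'
          · rw [← ENNReal.ofReal_one]
            apply ENNReal.ofReal_le_ofReal
            apply Real.exp_le_one_iff.mpr
            nlinarith [hs.1, hs.2, ht.1, ht.2]
          · exact le_rfl
      _ = T := by
          rw [hTdef, lintegral_prod N hNmeas.aemeasurable]
          exact lintegral_congr fun s => lintegral_congr fun t => one_mul _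
  -- RHS conversion
  set ρ : ℝ → ℝ≥0∞ :=
    fun s => ∫⁻ t in Ioc (0:ℝ) 1, ENNReal.ofReal (Real.exp (-m * (s + t))) * N (s, t) with hρdef
  have hρmeas : Measurable ρ := by
    apply Measurable.lintegral_prod_right
      (f := fun s t => ENNReal.ofReal (Real.exp (-m * (s + t))) * N (s, t))
    exact (((measurable_fst.add measurable_snd).const_mul (-m)).exp.ennreal_ofReal).mul hNmeas
  have hC1R : ∀ᵐ s ∂μ, (∫ t in (0:ℝ)..1, Real.exp (-m * (s + t)) * ‖l s t‖ ^ 2)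
      = (ρ s).toReal ∧ ρ s < ⊤ := by
    filter_upwards [hslice, hΦ1fin, ae_restrict_mem measurableSet_Ioc] with s hs h1 hsI
    have hρle : ρ s < ⊤ := by
      calc ρ s ≤ ∫⁻ t in Ioc (0:ℝ) 1, 1 * N (s, t) := by
            apply setLIntegral_mono' measurableSet_Ioc
            intro t ht
            apply mul_le_mul'
            · rw [← ENNReal.ofReal_one]
              apply ENNReal.ofReal_le_ofReal
              apply Real.exp_le_one_iff.mpr
              nlinarith [hsI.1, hsI.2, ht.1, ht.2]
            · exact le_rfl
        _ = Φ s 1 := by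
            rw [hΦeq s 1 le_rfl]
            exact lintegral_congr fun t => one_mul _
        _ < ⊤ := h1
    refine ⟨?_, hρle⟩
    rw [intervalIntegral.integral_of_le zero_le_one]
    have hcg : (fun t => Real.exp (-m * (s + t)) * ‖l s t‖ ^ 2)
        =ᵐ[volume.restrict (Ioc (0:ℝ) 1)]
        fun t => Real.exp (-m * (s + t)) * ‖l' (s, t)‖ ^ 2 := by
      filter_upwards [hs] with t ht
      rw [ht]
    rw [integral_congr_ae hcg,
      integral_eq_lintegral_of_nonneg_ae (μ := volume.restrict (Ioc (0:ℝ) 1))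
        (f := fun t => Real.exp (-m * (s + t)) * ‖l' (s, t)‖ ^ 2)
        (Filter.Eventually.of_forall fun t => by positivity)
        (((measurable_const.add measurable_id).const_mul (-m)).exp.mul
          ((hl'meas.comp measurable_prodMk_left).norm.pow_const 2)).aestronglyMeasurable]
    rw [hρdef]
    congr 1
    apply lintegral_congr fun t => ?_
    rw [ENNReal.ofReal_mul (Real.exp_pos _).le, ENNReal.ofReal_pow (norm_nonneg _),
      ofReal_norm, enorm_eq_nnnorm]
  have hR : (∫ s in (0:ℝ)..1, ∫ t in (0:ℝ)..1, Real.exp (-m * (s + t)) * ‖l s t‖ ^ 2)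
      = B.toReal := by
    rw [intervalIntegral.integral_of_le zero_le_one]
    have hcg2 : (fun s => ∫ t in (0:ℝ)..1, Real.exp (-m * (s + t)) * ‖l s t‖ ^ 2)
        =ᵐ[volume.restrict (Ioc (0:ℝ) 1)] fun s => (ρ s).toReal := by
      filter_upwards [hC1R] with s hsp
      exact hsp.1
    rw [integral_congr_ae hcg2,
      integral_eq_lintegral_of_nonneg_ae (μ := volume.restrict (Ioc (0:ℝ) 1))
        (f := fun s => (ρ s).toReal)
        (Filter.Eventually.of_forall fun s => ENNReal.toReal_nonneg)
        (ENNReal.measurable_toReal.comp hρmeas).aestronglyMeasurable]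
    rw [hBdef]
    congr 1
    apply lintegral_congr_ae
    filter_upwards [hC1R] with s hsp
    exact ENNReal.ofReal_toReal hsp.2.ne
  -- final assembly
  rw [hC4, hR]
  have hBfin : B ≠ ⊤ := (lt_of_le_of_lt hBle hfin).ne
  have hCfin : ENNReal.ofReal (1/m) * (ENNReal.ofReal (1/m) * B) ≠ ⊤ :=
    ENNReal.mul_ne_top ENNReal.ofReal_ne_top
      (ENNReal.mul_ne_top ENNReal.ofReal_ne_top hBfin)
  calc A.toReal ≤ (ENNReal.ofReal (1/m) * (ENNReal.ofReal (1/m) * B)).toReal :=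
        ENNReal.toReal_mono hCfin hABfinal
    _ = (1/m) * ((1/m) * B.toReal) := by
        rw [ENNReal.toReal_mul, ENNReal.toReal_mul,
          ENNReal.toReal_ofReal (by positivity : (0:ℝ) ≤ 1/m)]
    _ ≤ (4 / m ^ 2) * B.toReal := by
        rw [← mul_assoc]
        have h1 : (1/m) * (1/m) = 1/m^2 := by
          field_simp
        rw [h1]
        apply mul_le_mul_of_nonneg_right _ ENNReal.toReal_nonneg
        gcongr
        norm_num
end

section
/- If z ∈ AC₀²(Q,ℝⁿ), i.e. z(x,y) = ∫₀ˣ∫₀ʸ l(s,t) ds dt with l ∈ L²(Q,ℝⁿ), then for every m>0, ‖z‖_{L²_m} ≤ (2/m) ‖z‖_{AC₀²,m}, where ‖z‖_{L²_m} = (∫₀¹∫₀¹ e^{-m(x+y)} |z(x,y)|² dx dy)^{1/2} and ‖z‖_{AC₀²,m} = (∫₀¹∫₀¹ e^{-m(x+y)} |l(x,y)|² dx dy)^{1/2}. -/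
open MeasureTheory Set Real
open scoped ENNReal NNReal

private lemma sq_rpow_half (b : ℝ≥0∞) : (b ^ ((1:ℝ)/2)) ^ 2 = b := by
  rw [← ENNReal.rpow_two, ← ENNReal.rpow_mul]
  norm_num

private lemma exp_lintegral_le {m x : ℝ} (hm : 0 < m) (hx : 0 ≤ x) :
    ∫⁻ s in Ioc 0 x, ENNReal.ofReal (Real.exp (m * s)) ≤ ENNReal.ofReal (Real.exp (m * x) / m) := by
  have hcont : Continuous fun s : ℝ => Real.exp (m * s) := by fun_prop
  have hint : IntegrableOn (fun s : ℝ => Real.exp (m * s)) (Ioc 0 x) := hcont.integrableOn_Ioc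
  rw [← ofReal_integral_eq_lintegral_ofReal hint
    (Filter.Eventually.of_forall fun s => (Real.exp_pos _).le)]
  apply ENNReal.ofReal_le_ofReal
  have hval : ∫ s in (0:ℝ)..x, Real.exp (m * s) = (Real.exp (m * x) - 1) / m := by
    have hderiv : ∀ s ∈ Set.uIcc (0:ℝ) x,
        HasDerivAt (fun u => Real.exp (m * u) / m) (Real.exp (m * s)) s := by
      intro s _
      have h1 : HasDerivAt (fun u : ℝ => m * u) m s := by
        simpa using (hasDerivAt_id s).const_mul m
      have h2 := ((Real.hasDerivAt_exp (m * s)).comp s h1).div_const m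
      convert h2 using 1
      · rfl
      · rfl
      · rfl
      · field_simp
    rw [intervalIntegral.integral_eq_sub_of_hasDerivAt hderiv (hcont.intervalIntegrable _ _)]
    simp [sub_div]
  rw [← intervalIntegral.integral_of_le hx, hval]
  gcongr
  linarith

/-- Weighted (Bielecki) L²-type norm with weight `e^{-m(x+y)}` on the unit square. -/
noncomputable def wnorm {n : ℕ} (m : ℝ) (v : ℝ → ℝ → EuclideanSpace ℝ (Fin n)) : ℝ :=
  (∫ x in (0:ℝ)..1, ∫ y in (0:ℝ)..1, Real.exp (-m * (x + y)) * ‖v x y‖ ^ 2) ^ ((1:ℝ)/2)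

/-- Lemma 3.1, inequality (3.1): if `z(x,y) = ∫₀ˣ∫₀ʸ l` with `l ∈ L²(Q,ℝⁿ)`, then
`‖z‖_{L²_m} ≤ (2/m)‖z‖_{AC₀²,m}` where `‖z‖_{AC₀²,m} = ‖l‖_{L²_m}`. -/
theorem primitive_weighted_estimate {n : ℕ} (m : ℝ) (hm : 0 < m)
    (l : ℝ → ℝ → EuclideanSpace ℝ (Fin n))
    (hl : MemLp (fun p : ℝ × ℝ => l p.1 p.2) 2 (volume.restrict Q))
    (z : ℝ → ℝ → EuclideanSpace ℝ (Fin n))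
    (hz : ∀ x y, z x y = ∫ s in (0:ℝ)..x, ∫ t in (0:ℝ)..y, l s t) :
    wnorm m z ≤ (2 / m) * wnorm m l := by
  obtain ⟨g, hgm, hfg⟩ := hl.1
  have hgmeas : Measurable g := hgm.measurable
  have hres : (volume : Measure (ℝ × ℝ)).restrict Q
      = ((volume : Measure ℝ).restrict (Icc 0 1)).prod ((volume : Measure ℝ).restrict (Icc 0 1)) := by
    rw [Measure.volume_eq_prod, Measure.prod_restrict]; rfl
  set A : ℝ≥0∞ :=
    ∫⁻ p in Q, ENNReal.ofReal (Real.exp (-m * (p.1 + p.2))) * (‖g p‖₊ : ℝ≥0∞) ^ 2 with hA_def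
  -- A is finite
  have hA_eq_f : A = ∫⁻ p in Q,
      ENNReal.ofReal (Real.exp (-m * (p.1 + p.2))) * (‖l p.1 p.2‖₊ : ℝ≥0∞) ^ 2 := by
    refine lintegral_congr_ae (hfg.mono fun p hp => ?_)
    simp only at hp ⊢
    rw [hp]
  have hA_top : A ≠ ⊤ := by
    have hQm : MeasurableSet Q := measurableSet_Icc.prod measurableSet_Icc
    have h1 : A ≤ ∫⁻ p in Q, (‖l p.1 p.2‖₊ : ℝ≥0∞) ^ 2 := by
      rw [hA_eq_f]
      refine lintegral_mono_ae (ae_restrict_of_forall_mem hQm fun p hp => ?_)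
      have hw : ENNReal.ofReal (Real.exp (-m * (p.1 + p.2))) ≤ 1 := by
        rw [show (1:ℝ≥0∞) = ENNReal.ofReal 1 by simp]
        apply ENNReal.ofReal_le_ofReal
        rw [Real.exp_le_one_iff]
        have h1 : 0 ≤ p.1 := hp.1.1
        have h2 : 0 ≤ p.2 := hp.2.1
        nlinarith
      calc ENNReal.ofReal (Real.exp (-m * (p.1 + p.2))) * (‖l p.1 p.2‖₊ : ℝ≥0∞) ^ 2
          ≤ 1 * (‖l p.1 p.2‖₊ : ℝ≥0∞) ^ 2 := by gcongr
        _ = (‖l p.1 p.2‖₊ : ℝ≥0∞) ^ 2 := one_mul _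
    have h2 : ∫⁻ p in Q, (‖l p.1 p.2‖₊ : ℝ≥0∞) ^ 2 < ⊤ := by
      have := hl.2
      rw [eLpNorm_eq_lintegral_rpow_enorm_toReal two_ne_zero ENNReal.ofNat_ne_top] at this
      simp only [ENNReal.toReal_ofNat, enorm_eq_nnnorm] at this
      have h3 : ∫⁻ p in Q, (‖l p.1 p.2‖₊ : ℝ≥0∞) ^ (2:ℝ) ∂volume < ⊤ := by
        by_contra hc
        push_neg at hc
        rw [top_le_iff.mp hc] at this
        simp [ENNReal.top_rpow_of_pos] at this
      simpa [ENNReal.rpow_two] using h3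
    exact (h1.trans_lt h2).ne
  -- the key pointwise Cauchy-Schwarz estimate
  have key : ∀ x ∈ Icc (0:ℝ) 1, ∀ y ∈ Icc (0:ℝ) 1,
      (‖z x y‖₊ : ℝ≥0∞) ^ 2 ≤ ENNReal.ofReal (Real.exp (m * (x + y)) / m ^ 2) * A := by
    intro x hx y hy
    have hslice : ∀ᵐ s ∂(volume.restrict (Icc (0:ℝ) 1)),
        ∀ᵐ t ∂(volume.restrict (Icc (0:ℝ) 1)), l s t = g (s, t) := by
      have h := hfg
      rw [hres] at h
      exact Measure.ae_ae_of_ae_prod h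
    have hsub_x : Ioc (0:ℝ) x ⊆ Icc 0 1 := fun s hs => ⟨hs.1.le, hs.2.trans hx.2⟩
    have hsub_y : Ioc (0:ℝ) y ⊆ Icc 0 1 := fun t ht => ⟨ht.1.le, ht.2.trans hy.2⟩
    have h1 : (‖z x y‖₊ : ℝ≥0∞) ≤ ∫⁻ s in Ioc 0 x, ∫⁻ t in Ioc 0 y, (‖l s t‖₊ : ℝ≥0∞) := by
      rw [hz, intervalIntegral.integral_of_le hx.1]
      refine (enorm_integral_le_lintegral_enorm _).trans (lintegral_mono fun s => ?_)
      rw [intervalIntegral.integral_of_le hy.1]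
      exact enorm_integral_le_lintegral_enorm _
    have h2 : ∫⁻ s in Ioc 0 x, ∫⁻ t in Ioc 0 y, (‖l s t‖₊ : ℝ≥0∞)
        = ∫⁻ s in Ioc 0 x, ∫⁻ t in Ioc 0 y, (‖g (s, t)‖₊ : ℝ≥0∞) := by
      refine lintegral_congr_ae ?_
      refine (ae_restrict_of_ae_restrict_of_subset hsub_x hslice).mono fun s hs => ?_
      refine lintegral_congr_ae
        ((ae_restrict_of_ae_restrict_of_subset hsub_y hs).mono fun t ht => ?_)
      simp only [ht]
    set R : Set (ℝ × ℝ) := Ioc (0:ℝ) x ×ˢ Ioc (0:ℝ) y with hR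
    have h3 : ∫⁻ s in Ioc 0 x, ∫⁻ t in Ioc 0 y, (‖g (s, t)‖₊ : ℝ≥0∞)
        = ∫⁻ p in R, (‖g p‖₊ : ℝ≥0∞) := by
      rw [hR, Measure.volume_eq_prod, ← Measure.prod_restrict,
        lintegral_prod _ (hgmeas.nnnorm.coe_nnreal_ennreal).aemeasurable]
    have hconj : Real.HolderConjugate 2 2 := Real.HolderConjugate.two_two
    have hcont1 : Continuous fun p : ℝ × ℝ => Real.exp (m * (p.1 + p.2) / 2) := by fun_prop
    have hcont2 : Continuous fun p : ℝ × ℝ => Real.exp (-m * (p.1 + p.2) / 2) := by fun_prop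
    have h4 : ∫⁻ p in R, (‖g p‖₊ : ℝ≥0∞)
        ≤ (∫⁻ p in R, ENNReal.ofReal (Real.exp (m * (p.1 + p.2)))) ^ ((1:ℝ)/2)
          * (∫⁻ p in R, ENNReal.ofReal (Real.exp (-m * (p.1 + p.2))) * (‖g p‖₊ : ℝ≥0∞) ^ 2)
            ^ ((1:ℝ)/2) := by
      have hm1 : AEMeasurable (fun p : ℝ × ℝ => ENNReal.ofReal (Real.exp (m * (p.1 + p.2) / 2)))
          (volume.restrict R) := (ENNReal.measurable_ofReal.comp hcont1.measurable).aemeasurable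
      have hm2 : AEMeasurable
          (fun p : ℝ × ℝ => ENNReal.ofReal (Real.exp (-m * (p.1 + p.2) / 2)) * (‖g p‖₊ : ℝ≥0∞))
          (volume.restrict R) :=
        ((ENNReal.measurable_ofReal.comp hcont2.measurable).mul
          hgmeas.nnnorm.coe_nnreal_ennreal).aemeasurable
      have H := ENNReal.lintegral_mul_le_Lp_mul_Lq (volume.restrict R) hconj hm1 hm2
      have e1 : ∀ p : ℝ × ℝ,
          ((fun p : ℝ × ℝ => ENNReal.ofReal (Real.exp (m * (p.1 + p.2) / 2)))
            * fun p => ENNReal.ofReal (Real.exp (-m * (p.1 + p.2) / 2)) * (‖g p‖₊ : ℝ≥0∞)) p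
          = (‖g p‖₊ : ℝ≥0∞) := by
        intro p
        simp only [Pi.mul_apply]
        rw [← mul_assoc, ← ENNReal.ofReal_mul (Real.exp_pos _).le, ← Real.exp_add,
          show m * (p.1 + p.2) / 2 + -m * (p.1 + p.2) / 2 = 0 by ring, Real.exp_zero,
          ENNReal.ofReal_one, one_mul]
      have e2 : ∀ p : ℝ × ℝ,
          ENNReal.ofReal (Real.exp (m * (p.1 + p.2) / 2)) ^ (2:ℝ)
          = ENNReal.ofReal (Real.exp (m * (p.1 + p.2))) := by
        intro p
        rw [ENNReal.ofReal_rpow_of_pos (Real.exp_pos _), ← Real.exp_mul]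
        ring_nf
      have e3 : ∀ p : ℝ × ℝ,
          (ENNReal.ofReal (Real.exp (-m * (p.1 + p.2) / 2)) * (‖g p‖₊ : ℝ≥0∞)) ^ (2:ℝ)
          = ENNReal.ofReal (Real.exp (-m * (p.1 + p.2))) * (‖g p‖₊ : ℝ≥0∞) ^ 2 := by
        intro p
        rw [ENNReal.mul_rpow_of_nonneg _ _ (by norm_num : (0:ℝ) ≤ 2),
          ENNReal.ofReal_rpow_of_pos (Real.exp_pos _), ← Real.exp_mul, ENNReal.rpow_two]
        ring_nf
      simp only [e1, e2, e3] at H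
      exact H
    have h5 : (∫⁻ p in R, ENNReal.ofReal (Real.exp (m * (p.1 + p.2))))
        ≤ ENNReal.ofReal (Real.exp (m * (x + y)) / m ^ 2) := by
      have e4 : ∀ p : ℝ × ℝ, ENNReal.ofReal (Real.exp (m * (p.1 + p.2)))
          = ENNReal.ofReal (Real.exp (m * p.1)) * ENNReal.ofReal (Real.exp (m * p.2)) := by
        intro p
        rw [← ENNReal.ofReal_mul (Real.exp_pos _).le, ← Real.exp_add]
        ring_nf
      simp only [e4]
      have hm3 : AEMeasurable (fun s : ℝ => ENNReal.ofReal (Real.exp (m * s)))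
          (volume.restrict (Ioc (0:ℝ) x)) :=
        (ENNReal.measurable_ofReal.comp
          ((Real.continuous_exp.comp (continuous_const.mul continuous_id)).measurable)).aemeasurable
      have hm4 : AEMeasurable (fun s : ℝ => ENNReal.ofReal (Real.exp (m * s)))
          (volume.restrict (Ioc (0:ℝ) y)) :=
        (ENNReal.measurable_ofReal.comp
          ((Real.continuous_exp.comp (continuous_const.mul continuous_id)).measurable)).aemeasurable
      rw [hR, Measure.volume_eq_prod, ← Measure.prod_restrict,
        lintegral_prod_mul hm3 hm4]
      calc (∫⁻ s in Ioc (0:ℝ) x, ENNReal.ofReal (Real.exp (m * s)))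
            * ∫⁻ t in Ioc (0:ℝ) y, ENNReal.ofReal (Real.exp (m * t))
          ≤ ENNReal.ofReal (Real.exp (m * x) / m) * ENNReal.ofReal (Real.exp (m * y) / m) := by
            exact mul_le_mul' (exp_lintegral_le hm hx.1) (exp_lintegral_le hm hy.1)
        _ = ENNReal.ofReal (Real.exp (m * (x + y)) / m ^ 2) := by
            rw [← ENNReal.ofReal_mul (by positivity)]
            congr 1
            rw [div_mul_div_comm, ← Real.exp_add]
            ring_nf
    have h6 : (∫⁻ p in R, ENNReal.ofReal (Real.exp (-m * (p.1 + p.2))) * (‖g p‖₊ : ℝ≥0∞) ^ 2)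
        ≤ A := by
      rw [hA_def]
      exact lintegral_mono_set (Set.prod_mono hsub_x hsub_y)
    have h7 : (‖z x y‖₊ : ℝ≥0∞)
        ≤ (ENNReal.ofReal (Real.exp (m * (x + y)) / m ^ 2)) ^ ((1:ℝ)/2) * A ^ ((1:ℝ)/2) := by
      refine ((h1.trans_eq h2).trans_eq h3).trans (h4.trans ?_)
      exact mul_le_mul' (ENNReal.rpow_le_rpow h5 (by norm_num))
        (ENNReal.rpow_le_rpow h6 (by norm_num))
    calc (‖z x y‖₊ : ℝ≥0∞) ^ 2
        ≤ ((ENNReal.ofReal (Real.exp (m * (x + y)) / m ^ 2)) ^ ((1:ℝ)/2) * A ^ ((1:ℝ)/2)) ^ 2 :=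
          pow_le_pow_left₀ zero_le h7 2
      _ = ENNReal.ofReal (Real.exp (m * (x + y)) / m ^ 2) * A := by
          rw [mul_pow, sq_rpow_half, sq_rpow_half]
  -- the real pointwise estimate
  have P : ∀ x ∈ Icc (0:ℝ) 1, ∀ y ∈ Icc (0:ℝ) 1,
      Real.exp (-m * (x + y)) * ‖z x y‖ ^ 2 ≤ (1 / m ^ 2) * A.toReal := by
    intro x hx y hy
    have h1 : ENNReal.ofReal (Real.exp (-m * (x + y))) * (‖z x y‖₊ : ℝ≥0∞) ^ 2
        ≤ ENNReal.ofReal (1 / m ^ 2) * A := by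
      calc ENNReal.ofReal (Real.exp (-m * (x + y))) * (‖z x y‖₊ : ℝ≥0∞) ^ 2
          ≤ ENNReal.ofReal (Real.exp (-m * (x + y)))
            * (ENNReal.ofReal (Real.exp (m * (x + y)) / m ^ 2) * A) := by
            gcongr
            exact key x hx y hy
        _ = ENNReal.ofReal (1 / m ^ 2) * A := by
            rw [← mul_assoc, ← ENNReal.ofReal_mul (Real.exp_pos _).le]
            congr 2
            rw [show -m * (x + y) = -(m * (x + y)) by ring, Real.exp_neg]
            field_simp
    have h2 : Real.exp (-m * (x + y)) * ‖z x y‖ ^ 2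
        = (ENNReal.ofReal (Real.exp (-m * (x + y))) * (‖z x y‖₊ : ℝ≥0∞) ^ 2).toReal := by
      rw [ENNReal.toReal_mul, ENNReal.toReal_pow, ENNReal.toReal_ofReal (Real.exp_pos _).le,
        ENNReal.coe_toReal, coe_nnnorm]
    have h3 : (ENNReal.ofReal (1 / m ^ 2) * A).toReal = (1 / m ^ 2) * A.toReal := by
      rw [ENNReal.toReal_mul, ENNReal.toReal_ofReal (by positivity)]
    rw [h2, ← h3]
    exact ENNReal.toReal_mono (ENNReal.mul_ne_top ENNReal.ofReal_ne_top hA_top) h1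
  -- bound the norm of z
  have hC : (0:ℝ) ≤ (1 / m ^ 2) * A.toReal := by positivity
  have hzbound : wnorm m z ≤ ((1 / m ^ 2) * A.toReal) ^ ((1:ℝ)/2) := by
    simp only [wnorm]
    refine Real.rpow_le_rpow ?_ ?_ (by norm_num)
    · refine intervalIntegral.integral_nonneg zero_le_one fun x _ => ?_
      refine intervalIntegral.integral_nonneg zero_le_one fun y _ => ?_
      positivity
    · have inner_le : ∀ x ∈ Icc (0:ℝ) 1,
          (∫ y in (0:ℝ)..1, Real.exp (-m * (x + y)) * ‖z x y‖ ^ 2)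
            ≤ (1 / m ^ 2) * A.toReal := by
        intro x hx
        by_cases hInt : IntervalIntegrable
            (fun y => Real.exp (-m * (x + y)) * ‖z x y‖ ^ 2) volume 0 1
        · have := intervalIntegral.integral_mono_on zero_le_one hInt
            (intervalIntegrable_const (c := (1 / m ^ 2) * A.toReal))
            (fun y hy => P x hx y hy)
          simpa using this
        · rw [intervalIntegral.integral_undef hInt]; exact hC
      by_cases hInt : IntervalIntegrable
          (fun x => ∫ y in (0:ℝ)..1, Real.exp (-m * (x + y)) * ‖z x y‖ ^ 2) volume 0 1
      · have := intervalIntegral.integral_mono_on zero_le_one hInt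
          (intervalIntegrable_const (c := (1 / m ^ 2) * A.toReal)) inner_le
        simpa using this
      · rw [intervalIntegral.integral_undef hInt]; exact hC
  -- identify the norm of l
  have hlnorm : wnorm m l = A.toReal ^ ((1:ℝ)/2) := by
    simp only [wnorm]
    congr 1
    have hQm : MeasurableSet Q := measurableSet_Icc.prod measurableSet_Icc
    set h : ℝ × ℝ → ℝ := fun p => Real.exp (-m * (p.1 + p.2)) * ‖l p.1 p.2‖ ^ 2 with hh
    have hInt : Integrable h (volume.restrict Q) := by
      have h2' := hl.integrable_norm_rpow two_ne_zero ENNReal.ofNat_ne_top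
      simp only [ENNReal.toReal_ofNat] at h2'
      have h2 : Integrable (fun p : ℝ × ℝ => ‖l p.1 p.2‖ ^ 2) (volume.restrict Q) := by
        have he : (fun p : ℝ × ℝ => ‖l p.1 p.2‖ ^ (2:ℝ)) = fun p : ℝ × ℝ => ‖l p.1 p.2‖ ^ 2 := by
          funext p; rw [Real.rpow_two]
        rwa [he] at h2'
      refine h2.bdd_mul (c := 1) ?_ ?_
      · exact (Real.continuous_exp.comp (by fun_prop)).aestronglyMeasurable
      · refine ae_restrict_of_forall_mem hQm fun p hp => ?_
        rw [Real.norm_eq_abs, abs_of_pos (Real.exp_pos _), Real.exp_le_one_iff]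
        nlinarith [hp.1.1, hp.2.1]
    have hAof : A = ENNReal.ofReal (∫ p in Q, h p) := by
      rw [hA_eq_f]
      have e : ∫⁻ p in Q, ENNReal.ofReal (Real.exp (-m * (p.1 + p.2))) * (‖l p.1 p.2‖₊ : ℝ≥0∞) ^ 2
          = ∫⁻ p in Q, ENNReal.ofReal (h p) := by
        refine lintegral_congr fun p => ?_
        rw [hh]
        simp only
        rw [ENNReal.ofReal_mul (Real.exp_pos _).le, ENNReal.ofReal_pow (norm_nonneg _),
          ofReal_norm, enorm_eq_nnnorm]
      rw [e, ← ofReal_integral_eq_lintegral_ofReal hInt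
        (ae_restrict_of_forall_mem hQm fun p hp => by positivity)]
    have hint : A.toReal = ∫ p in Q, h p := by
      rw [hAof, ENNReal.toReal_ofReal]
      exact setIntegral_nonneg hQm fun p hp => by positivity
    have hiter : ∫ p in Q, h p = ∫ x in (0:ℝ)..1, ∫ y in (0:ℝ)..1, h (x, y) := by
      have hInt' := hInt
      rw [hres] at hInt'
      rw [hres, integral_prod _ hInt']
      simp only [intervalIntegral.integral_of_le zero_le_one]
      rw [MeasureTheory.integral_Icc_eq_integral_Ioc]
      refine integral_congr_ae (Filter.Eventually.of_forall fun x => ?_)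
      simp only [MeasureTheory.integral_Icc_eq_integral_Ioc]
    rw [hint, hiter]
  calc wnorm m z ≤ ((1 / m ^ 2) * A.toReal) ^ ((1:ℝ)/2) := hzbound
    _ = (1 / m) * A.toReal ^ ((1:ℝ)/2) := by
        rw [Real.mul_rpow (by positivity) ENNReal.toReal_nonneg]
        congr 1
        rw [show (1 / m ^ 2) = (1 / m) ^ 2 by ring, ← Real.rpow_two,
          ← Real.rpow_mul (by positivity)]
        norm_num
    _ = (1 / m) * wnorm m l := by rw [hlnorm]
    _ ≤ (2 / m) * wnorm m l := by
        refine mul_le_mul_of_nonneg_right ?_ (by rw [hlnorm]; positivity)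
        exact (div_le_div_iff_of_pos_right hm).mpr one_le_two
end

section
/- Let z ∈ AC₀²(Q,ℝⁿ) and define w₀(x,y) = ∫₀ˣ∫₀ʸ |z(s,t)| ds dt. Then for every m>0, ‖w₀‖_{L²_m} ≤ (2/m) ‖z‖_{AC₀²,m}. -/
open MeasureTheory Set Real

/-- Weighted (Bielecki) L²-type norm for scalar functions on the unit square. -/
noncomputable def wnormR (m : ℝ) (v : ℝ → ℝ → ℝ) : ℝ :=
  (∫ x in (0:ℝ)..1, ∫ y in (0:ℝ)..1, Real.exp (-m * (x + y)) * |v x y| ^ 2) ^ ((1:ℝ)/2)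

/-- Monotonicity of the interval integral for a nonnegative (possibly non-integrable)
function dominated by an integrable one. -/
private lemma intInt_mono_of_nonneg {y : ℝ} (hy : 0 ≤ y) {f g : ℝ → ℝ}
    (hf0 : ∀ t, 0 ≤ f t) (hg : IntervalIntegrable g volume 0 y)
    (hle : ∀ t ∈ Icc (0:ℝ) y, f t ≤ g t) :
    ∫ t in (0:ℝ)..y, f t ≤ ∫ t in (0:ℝ)..y, g t := by
  by_cases hfi : IntervalIntegrable f volume 0 y
  · exact intervalIntegral.integral_mono_on hy hfi hg hle
  · rw [intervalIntegral.integral_undef hfi]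
    exact intervalIntegral.integral_nonneg hy fun t ht => (hf0 t).trans (hle t ht)

/-- `∫₀ˢ e^{mu} du = (e^{ms}-1)/m`. -/
private lemma integral_exp_mul (m s : ℝ) (hm : m ≠ 0) :
    ∫ u in (0:ℝ)..s, Real.exp (m * u) = m⁻¹ * (Real.exp (m * s) - 1) := by
  rw [intervalIntegral.integral_comp_mul_left Real.exp hm]
  simp [integral_exp, smul_eq_mul]

private lemma exp_sub_one_le (u : ℝ) : Real.exp u - 1 ≤ u * Real.exp u := by
  have h1 : Real.exp (-u) * Real.exp u = 1 := by rw [← Real.exp_add]; simp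
  nlinarith [Real.add_one_le_exp (-u), Real.exp_pos u, h1]

/-- Lemma 3.1, inequality (3.2): for `z ∈ AC₀²(Q,ℝⁿ)` and
`w₀(x,y) = ∫₀ˣ∫₀ʸ |z(s,t)| ds dt`, one has `‖w₀‖_{L²_m} ≤ (2/m)‖z‖_{AC₀²,m}`. -/
theorem w0_weighted_estimate {n : ℕ} (m : ℝ) (hm : 0 < m)
    (l : ℝ → ℝ → EuclideanSpace ℝ (Fin n))
    (hl : MemLp (fun p : ℝ × ℝ => l p.1 p.2) 2 (volume.restrict Q))
    (z : ℝ → ℝ → EuclideanSpace ℝ (Fin n))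
    (hz : ∀ x y, z x y = ∫ s in (0:ℝ)..x, ∫ t in (0:ℝ)..y, l s t)
    (w0 : ℝ → ℝ → ℝ)
    (hw0 : ∀ x y, w0 x y = ∫ s in (0:ℝ)..x, ∫ t in (0:ℝ)..y, ‖z s t‖) :
    wnormR m w0 ≤ (2 / m) * wnorm m l := by
  have hQmeas : MeasurableSet Q := (measurableSet_Icc).prod measurableSet_Icc
  have hQfin : volume Q < ⊤ := (isCompact_Icc.prod isCompact_Icc).measure_lt_top
  -- the weighted square integrand
  set W : ℝ × ℝ → ℝ := fun p => Real.exp (-m * (p.1 + p.2)) * ‖l p.1 p.2‖ ^ 2 with hWdef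
  set N : ℝ × ℝ → ℝ := fun p => ‖l p.1 p.2‖ with hNdef
  have hNmeas : AEStronglyMeasurable N (volume.restrict Q) := hl.1.norm
  have hN2 : Integrable (fun p : ℝ × ℝ => N p ^ 2) (volume.restrict Q) :=
    hl.norm.integrable_sq
  have hWint : Integrable W (volume.restrict Q) := by
    refine hN2.mono' (AEStronglyMeasurable.mul ?_ hN2.1) ?_
    · exact (Continuous.aestronglyMeasurable (by fun_prop))
    · filter_upwards [ae_restrict_mem hQmeas] with p hp
      have hx : (0:ℝ) ≤ p.1 := hp.1.1
      have hy : (0:ℝ) ≤ p.2 := hp.2.1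
      have hexp : Real.exp (-m * (p.1 + p.2)) ≤ 1 := by
        rw [Real.exp_le_one_iff]
        nlinarith
      have : (0:ℝ) ≤ ‖l p.1 p.2‖ ^ 2 := by positivity
      simp only [hWdef, hNdef, Real.norm_eq_abs, abs_mul]
      rw [abs_of_pos (Real.exp_pos _), abs_of_nonneg this]
      nlinarith [Real.exp_pos (-m * (p.1 + p.2))]
  -- integrability of N on Q
  haveI : Fact (volume Q < ⊤) := ⟨hQfin⟩
  have hNint : Integrable N (volume.restrict Q) :=
    (hl.integrable one_le_two).norm
  -- the iterated weighted integral of ‖l‖²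
  set T : ℝ := ∫ x in (0:ℝ)..1, ∫ y in (0:ℝ)..1,
      Real.exp (-m * (x + y)) * ‖l x y‖ ^ 2 with hTdef
  set S : ℝ := Real.sqrt T with hSdef
  have hS0 : 0 ≤ S := Real.sqrt_nonneg T
  -- Fubini : the set integral of W over (0,1]×(0,1] equals T
  have hsub : Ioc (0:ℝ) 1 ×ˢ Ioc (0:ℝ) 1 ⊆ Q :=
    prod_mono Ioc_subset_Icc_self Ioc_subset_Icc_self
  have hWQQ : IntegrableOn W (Ioc (0:ℝ) 1 ×ˢ Ioc (0:ℝ) 1) volume :=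
    hWint.mono_measure (Measure.restrict_mono hsub le_rfl)
  have hWQQ' : IntegrableOn W (Ioc (0:ℝ) 1 ×ˢ Ioc (0:ℝ) 1) (volume.prod volume) := by
    rw [← MeasureTheory.Measure.volume_eq_prod]; exact hWQQ
  have hTeq : ∫ p in Ioc (0:ℝ) 1 ×ˢ Ioc (0:ℝ) 1, W p = T := by
    rw [MeasureTheory.Measure.volume_eq_prod, setIntegral_prod W hWQQ', hTdef]
    simp only [intervalIntegral.integral_of_le (zero_le_one (α := ℝ)), hWdef]
  -- set integrals of W over subrectangles are at most T
  have hWle : ∀ s t : ℝ, s ∈ Icc (0:ℝ) 1 → t ∈ Icc (0:ℝ) 1 →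
      ∫ p in Ioc (0:ℝ) s ×ˢ Ioc (0:ℝ) t, W p ≤ T := by
    intro s t hs ht
    rw [← hTeq]
    refine setIntegral_mono_set hWQQ (ae_of_all _ fun p => by positivity) ?_
    exact HasSubset.Subset.eventuallyLE
      (prod_mono (Ioc_subset_Ioc le_rfl hs.2) (Ioc_subset_Ioc le_rfl ht.2))
  -- pointwise bound on z
  have hzb : ∀ s ∈ Icc (0:ℝ) 1, ∀ t ∈ Icc (0:ℝ) 1,
      ‖z s t‖ ≤ 1 / m * Real.exp (m * (s + t) / 2) * S := by
    intro s hs t ht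
    set Rst : Set (ℝ × ℝ) := Ioc (0:ℝ) s ×ˢ Ioc (0:ℝ) t with hRst
    have hsubst : Rst ⊆ Q :=
      prod_mono (Ioc_subset_Icc_self.trans (Icc_subset_Icc le_rfl hs.2))
        (Ioc_subset_Icc_self.trans (Icc_subset_Icc le_rfl ht.2))
    have hNR : Integrable N (volume.restrict Rst) :=
      hNint.mono_measure (Measure.restrict_mono hsubst le_rfl)
    have hWR : Integrable W (volume.restrict Rst) :=
      hWint.mono_measure (Measure.restrict_mono hsubst le_rfl)
    have hRmeas : MeasurableSet Rst := measurableSet_Ioc.prod measurableSet_Ioc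
    haveI : IsFiniteMeasure (volume.restrict Rst) := ⟨by
      rw [Measure.restrict_apply_univ]
      exact lt_of_le_of_lt (measure_mono hsubst) hQfin⟩
    have hNR' : Integrable (fun p : ℝ × ℝ => N p)
        ((volume.restrict (Ioc (0:ℝ) s)).prod (volume.restrict (Ioc (0:ℝ) t))) := by
      rw [Measure.prod_restrict, ← Measure.volume_eq_prod]; exact hNR
    have hNR'' : IntegrableOn N Rst ((volume : Measure ℝ).prod volume) := by
      rw [← Measure.volume_eq_prod]; exact hNR
    -- step 1 : bound by the iterated integral of norms
    have h1 : ‖z s t‖ ≤ ∫ u in (0:ℝ)..s, ∫ v in (0:ℝ)..t, ‖l u v‖ := by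
      rw [hz]
      refine le_trans (intervalIntegral.norm_integral_le_integral_norm hs.1) ?_
      refine intInt_mono_of_nonneg hs.1 (fun u => norm_nonneg _) ?_
        (fun u _ => intervalIntegral.norm_integral_le_integral_norm ht.1)
      rw [intervalIntegrable_iff_integrableOn_Ioc_of_le hs.1]
      have heq : (fun u => ∫ v in (0:ℝ)..t, ‖l u v‖)
          = fun u => ∫ v, N (u, v) ∂(volume.restrict (Ioc (0:ℝ) t)) := by
        funext u; rw [intervalIntegral.integral_of_le ht.1]
      rw [heq]
      exact hNR'.integral_prod_left
    -- step 2 : the iterated integral equals the set integral over the rectangle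
    have h2 : ∫ u in (0:ℝ)..s, ∫ v in (0:ℝ)..t, ‖l u v‖ = ∫ p in Rst, N p := by
      rw [hRst, Measure.volume_eq_prod ℝ ℝ, setIntegral_prod N hNR'',
        intervalIntegral.integral_of_le hs.1]
      simp only [intervalIntegral.integral_of_le ht.1, hNdef]
    -- Cauchy–Schwarz on the rectangle
    set f : ℝ × ℝ → ℝ := fun p => Real.exp (m * (p.1 + p.2) / 2) with hfdef
    set g : ℝ × ℝ → ℝ := fun p => Real.exp (-m * (p.1 + p.2) / 2) * N p with hgdef
    have hfg : ∀ p, f p * g p = N p := by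
      intro p
      simp only [hfdef, hgdef]
      rw [← mul_assoc, ← Real.exp_add,
        show m * (p.1 + p.2) / 2 + -m * (p.1 + p.2) / 2 = 0 by ring, Real.exp_zero, one_mul]
    have hfsq : ∀ p : ℝ × ℝ, f p ^ 2 = Real.exp (m * p.1) * Real.exp (m * p.2) := by
      intro p; simp only [hfdef]
      rw [sq, ← Real.exp_add, ← Real.exp_add]; congr 1; ring
    have hgsq : ∀ p : ℝ × ℝ, g p ^ 2 = W p := by
      intro p; simp only [hgdef, hWdef, hNdef]
      rw [mul_pow, sq (Real.exp _), ← Real.exp_add,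
        show -m * (p.1 + p.2) / 2 + -m * (p.1 + p.2) / 2 = -m * (p.1 + p.2) by ring]
    have h2e : ENNReal.ofReal (2:ℝ) = 2 := by norm_num
    have hfmem : MemLp f (ENNReal.ofReal 2) (volume.restrict Rst) := by
      refine MemLp.of_bound (Continuous.aestronglyMeasurable (by fun_prop)) (Real.exp m) ?_
      filter_upwards [ae_restrict_mem hRmeas] with p hp
      rw [Real.norm_eq_abs, abs_of_pos (Real.exp_pos _), Real.exp_le_exp]
      have h1 : p.1 ≤ s := hp.1.2
      have h2 : p.2 ≤ t := hp.2.2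
      nlinarith [hs.2, ht.2, hm]
    have hgmeas : AEStronglyMeasurable g (volume.restrict Rst) :=
      (Continuous.aestronglyMeasurable (by fun_prop)).mul
        (hNmeas.mono_measure (Measure.restrict_mono hsubst le_rfl))
    have hgmem : MemLp g (ENNReal.ofReal 2) (volume.restrict Rst) := by
      rw [h2e, memLp_two_iff_integrable_sq hgmeas,
        show (fun p => g p ^ 2) = W from funext hgsq]
      exact hWR
    have hpq : Real.HolderConjugate 2 2 := Real.HolderConjugate.two_two
    have hCS := integral_mul_le_Lp_mul_Lq_of_nonneg hpq
      (ae_of_all _ fun p => (Real.exp_pos _).le)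
      (ae_of_all _ fun p => mul_nonneg (Real.exp_pos _).le (norm_nonneg _))
      hfmem hgmem
    have hr2 : ∀ x : ℝ, x ^ (2:ℝ) = x ^ 2 := fun x => by
      rw [show (2:ℝ) = ((2:ℕ):ℝ) by norm_num, Real.rpow_natCast]
    simp only [hfg, hr2, ← Real.sqrt_eq_rpow] at hCS
    -- evaluate the exponential integral
    have hE1 : ∫ u in Ioc (0:ℝ) s, Real.exp (m * u) = m⁻¹ * (Real.exp (m * s) - 1) := by
      rw [← intervalIntegral.integral_of_le hs.1]; exact integral_exp_mul m s hm.ne'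
    have hE2 : ∫ u in Ioc (0:ℝ) t, Real.exp (m * u) = m⁻¹ * (Real.exp (m * t) - 1) := by
      rw [← intervalIntegral.integral_of_le ht.1]; exact integral_exp_mul m t hm.ne'
    have hfsqint : ∫ p in Rst, f p ^ 2
        = m⁻¹ * (Real.exp (m * s) - 1) * (m⁻¹ * (Real.exp (m * t) - 1)) := by
      simp only [hfsq]
      rw [hRst, Measure.volume_eq_prod ℝ ℝ,
        setIntegral_prod_mul (fun u => Real.exp (m * u)) (fun v => Real.exp (m * v))
          (Ioc (0:ℝ) s) (Ioc (0:ℝ) t), hE1, hE2]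
    have hfsqle : ∫ p in Rst, f p ^ 2 ≤ Real.exp (m * (s + t)) / m ^ 2 := by
      rw [hfsqint, show Real.exp (m * (s + t)) / m ^ 2
          = m⁻¹ * Real.exp (m * s) * (m⁻¹ * Real.exp (m * t)) by
        rw [show m * (s + t) = m * s + m * t by ring, Real.exp_add]; field_simp]
      have e1 : (1:ℝ) ≤ Real.exp (m * s) := Real.one_le_exp (mul_nonneg hm.le hs.1)
      have e2 : (1:ℝ) ≤ Real.exp (m * t) := Real.one_le_exp (mul_nonneg hm.le ht.1)
      have hminv : (0:ℝ) ≤ m⁻¹ := by positivity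
      gcongr <;> nlinarith
    have hsq1 : Real.sqrt (∫ p in Rst, f p ^ 2) ≤ Real.exp (m * (s + t) / 2) / m := by
      refine le_trans (Real.sqrt_le_sqrt hfsqle) ?_
      rw [show Real.exp (m * (s + t)) / m ^ 2 = (Real.exp (m * (s + t) / 2) / m) ^ 2 by
        rw [div_pow, sq (Real.exp _), ← Real.exp_add,
          show m * (s + t) / 2 + m * (s + t) / 2 = m * (s + t) by ring]]
      exact (Real.sqrt_sq (by positivity)).le
    have hsq2 : Real.sqrt (∫ p in Rst, g p ^ 2) ≤ S := by
      simp only [hgsq]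
      exact Real.sqrt_le_sqrt (hWle s t hs ht)
    calc ‖z s t‖ ≤ ∫ u in (0:ℝ)..s, ∫ v in (0:ℝ)..t, ‖l u v‖ := h1
      _ = ∫ p in Rst, N p := h2
      _ ≤ Real.sqrt (∫ p in Rst, f p ^ 2) * Real.sqrt (∫ p in Rst, g p ^ 2) := by
          refine le_trans (le_of_eq ?_) hCS
          exact integral_congr_ae (ae_of_all _ fun p => (hfg p).symm)
      _ ≤ Real.exp (m * (s + t) / 2) / m * S :=
          mul_le_mul hsq1 hsq2 (Real.sqrt_nonneg _) (by positivity)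
      _ = 1 / m * Real.exp (m * (s + t) / 2) * S := by ring
  -- pointwise bound on w0
  have hw0nn : ∀ x ∈ Icc (0:ℝ) 1, ∀ y ∈ Icc (0:ℝ) 1, 0 ≤ w0 x y := by
    intro x hx y hy
    rw [hw0]
    refine intervalIntegral.integral_nonneg hx.1 fun s _ => ?_
    exact intervalIntegral.integral_nonneg hy.1 fun t _ => norm_nonneg _
  have hB : ∀ c ∈ Icc (0:ℝ) 1, (∫ u in (0:ℝ)..c, Real.exp (m / 2 * u))
      ≤ c * Real.exp (m / 2 * c) := by
    intro c _
    rw [integral_exp_mul (m / 2) c (by positivity)]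
    have h := exp_sub_one_le (m / 2 * c)
    calc (m / 2)⁻¹ * (Real.exp (m / 2 * c) - 1)
        ≤ (m / 2)⁻¹ * (m / 2 * c * Real.exp (m / 2 * c)) :=
          mul_le_mul_of_nonneg_left h (by positivity)
      _ = c * Real.exp (m / 2 * c) := by field_simp
  have hB0 : ∀ c ∈ Icc (0:ℝ) 1, 0 ≤ ∫ u in (0:ℝ)..c, Real.exp (m / 2 * u) :=
    fun c hc => intervalIntegral.integral_nonneg hc.1 fun u _ => (Real.exp_pos _).le
  have hw0b : ∀ x ∈ Icc (0:ℝ) 1, ∀ y ∈ Icc (0:ℝ) 1,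
      w0 x y ≤ S / m * (x * Real.exp (m / 2 * x)) * (y * Real.exp (m / 2 * y)) := by
    intro x hx y hy
    have hinner : ∀ s ∈ Icc (0:ℝ) 1, (∫ t in (0:ℝ)..y, ‖z s t‖)
        ≤ S / m * Real.exp (m / 2 * s) * ∫ t in (0:ℝ)..y, Real.exp (m / 2 * t) := by
      intro s hsI
      rw [← intervalIntegral.integral_const_mul]
      refine intInt_mono_of_nonneg hy.1 (fun t => norm_nonneg _)
        (Continuous.intervalIntegrable (by fun_prop) 0 y) ?_
      intro t htI
      calc ‖z s t‖ ≤ 1 / m * Real.exp (m * (s + t) / 2) * S :=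
            hzb s hsI t (Icc_subset_Icc le_rfl hy.2 htI)
        _ = S / m * Real.exp (m / 2 * s) * Real.exp (m / 2 * t) := by
            rw [show m * (s + t) / 2 = m / 2 * s + m / 2 * t by ring, Real.exp_add]; ring
    rw [hw0]
    calc (∫ s in (0:ℝ)..x, ∫ t in (0:ℝ)..y, ‖z s t‖)
        ≤ ∫ s in (0:ℝ)..x,
            S / m * Real.exp (m / 2 * s) * ∫ t in (0:ℝ)..y, Real.exp (m / 2 * t) := by
          refine intInt_mono_of_nonneg hx.1
            (fun s => intervalIntegral.integral_nonneg hy.1 fun t _ => norm_nonneg _)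
            (Continuous.intervalIntegrable (by fun_prop) 0 x) ?_
          exact fun s hsI => hinner s (Icc_subset_Icc le_rfl hx.2 hsI)
      _ = S / m * (∫ s in (0:ℝ)..x, Real.exp (m / 2 * s))
            * ∫ t in (0:ℝ)..y, Real.exp (m / 2 * t) := by
          rw [intervalIntegral.integral_mul_const, intervalIntegral.integral_const_mul]
      _ ≤ S / m * (x * Real.exp (m / 2 * x)) * (y * Real.exp (m / 2 * y)) := by
          have hb1 : 0 ≤ S / m := div_nonneg hS0 hm.le
          refine mul_le_mul (mul_le_mul le_rfl (hB x hx) (hB0 x hx) hb1)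
            (hB y hy) (hB0 y hy) ?_
          exact mul_nonneg hb1 (mul_nonneg hx.1 (Real.exp_pos _).le)
  -- final estimate
  have hfinal : ∫ x in (0:ℝ)..1, ∫ y in (0:ℝ)..1,
      Real.exp (-m * (x + y)) * |w0 x y| ^ 2 ≤ (S / m) ^ 2 / 9 := by
    have hpt : ∀ x ∈ Icc (0:ℝ) 1, ∀ y ∈ Icc (0:ℝ) 1,
        Real.exp (-m * (x + y)) * |w0 x y| ^ 2 ≤ (S / m) ^ 2 * x ^ 2 * y ^ 2 := by
      intro x hx y hy
      have h0 := hw0nn x hx y hy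
      have h1 := hw0b x hx y hy
      rw [abs_of_nonneg h0]
      have hsq : w0 x y ^ 2
          ≤ (S / m * (x * Real.exp (m / 2 * x)) * (y * Real.exp (m / 2 * y))) ^ 2 :=
        pow_le_pow_left₀ h0 h1 2
      have e2x : Real.exp (m / 2 * x) ^ 2 = Real.exp (m * x) := by
        rw [sq, ← Real.exp_add, show m / 2 * x + m / 2 * x = m * x by ring]
      have e2y : Real.exp (m / 2 * y) ^ 2 = Real.exp (m * y) := by
        rw [sq, ← Real.exp_add, show m / 2 * y + m / 2 * y = m * y by ring]
      have hone : Real.exp (-m * (x + y)) * Real.exp (m / 2 * x) ^ 2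
          * Real.exp (m / 2 * y) ^ 2 = 1 := by
        rw [e2x, e2y, ← Real.exp_add, ← Real.exp_add,
          show -m * (x + y) + m * x + m * y = 0 by ring, Real.exp_zero]
      calc Real.exp (-m * (x + y)) * w0 x y ^ 2
          ≤ Real.exp (-m * (x + y))
            * (S / m * (x * Real.exp (m / 2 * x)) * (y * Real.exp (m / 2 * y))) ^ 2 :=
            mul_le_mul_of_nonneg_left hsq (Real.exp_pos _).le
        _ = (S / m) ^ 2 * x ^ 2 * y ^ 2 * (Real.exp (-m * (x + y))
            * Real.exp (m / 2 * x) ^ 2 * Real.exp (m / 2 * y) ^ 2) := by ring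
        _ = (S / m) ^ 2 * x ^ 2 * y ^ 2 := by rw [hone, mul_one]
    have hinner2 : ∀ x ∈ Icc (0:ℝ) 1,
        (∫ y in (0:ℝ)..1, Real.exp (-m * (x + y)) * |w0 x y| ^ 2)
          ≤ (S / m) ^ 2 * x ^ 2 / 3 := by
      intro x hx
      calc (∫ y in (0:ℝ)..1, Real.exp (-m * (x + y)) * |w0 x y| ^ 2)
          ≤ ∫ y in (0:ℝ)..1, (S / m) ^ 2 * x ^ 2 * y ^ 2 := by
            refine intInt_mono_of_nonneg zero_le_one (fun y => by positivity)
              (Continuous.intervalIntegrable (by fun_prop) 0 1) (hpt x hx)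
        _ = (S / m) ^ 2 * x ^ 2 / 3 := by
            rw [intervalIntegral.integral_const_mul, integral_pow]
            norm_num
            ring
    calc (∫ x in (0:ℝ)..1, ∫ y in (0:ℝ)..1, Real.exp (-m * (x + y)) * |w0 x y| ^ 2)
        ≤ ∫ x in (0:ℝ)..1, (S / m) ^ 2 * x ^ 2 / 3 := by
          refine intInt_mono_of_nonneg zero_le_one
            (fun x => intervalIntegral.integral_nonneg zero_le_one fun y _ => by positivity)
            (Continuous.intervalIntegrable (by fun_prop) 0 1) hinner2
      _ = (S / m) ^ 2 / 9 := by
          simp only [show ∀ x : ℝ, (S / m) ^ 2 * x ^ 2 / 3 = (S / m) ^ 2 / 3 * x ^ 2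
            from fun x => by ring]
          rw [intervalIntegral.integral_const_mul, integral_pow]
          norm_num
          ring
  have hD0 : 0 ≤ ∫ x in (0:ℝ)..1, ∫ y in (0:ℝ)..1,
      Real.exp (-m * (x + y)) * |w0 x y| ^ 2 := by
    apply intervalIntegral.integral_nonneg (by norm_num)
    intro x _
    apply intervalIntegral.integral_nonneg (by norm_num)
    intro y _
    positivity
  have hwnorml : wnorm m l = S := by
    rw [wnorm, hSdef, Real.sqrt_eq_rpow]
  have hT0 : 0 ≤ T := by
    apply intervalIntegral.integral_nonneg (by norm_num)
    intro x _
    apply intervalIntegral.integral_nonneg (by norm_num)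
    intro y _
    positivity
  rw [hwnorml, wnormR, ← Real.sqrt_eq_rpow]
  calc Real.sqrt (∫ x in (0:ℝ)..1, ∫ y in (0:ℝ)..1,
        Real.exp (-m * (x + y)) * |w0 x y| ^ 2)
      ≤ Real.sqrt ((S / m) ^ 2 / 9) := Real.sqrt_le_sqrt hfinal
    _ = S / m / 3 := by
        rw [show (S / m) ^ 2 / 9 = (S / m / 3) ^ 2 by ring, Real.sqrt_sq (by positivity)]
    _ ≤ 2 / m * S := by
        have hx : 0 ≤ S / m := by positivity
        calc S / m / 3 ≤ S / m * 2 := by linarith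
          _ = 2 / m * S := by ring
end

section
/- Let z ∈ AC₀²(Q,ℝⁿ) and define w₁(x,y) = ∫₀ˣ∫₀ʸ |z_x(s,t)| ds dt, where z_x(s,t) = ∫₀ᵗ z_{xy}(s,τ) dτ. Then for every m>0, ‖w₁‖_{L²_m} ≤ (2/m) ‖z‖_{AC₀²,m}. -/
open MeasureTheory Set Real Filter
open scoped ENNReal

/-- Cauchy–Schwarz for integrals of nonnegative real functions. -/
private lemma cs_helper {μ : Measure ℝ} {f g : ℝ → ℝ}
    (hf : 0 ≤ᵐ[μ] f) (hg : 0 ≤ᵐ[μ] g) (hf2 : MemLp f 2 μ) (hg2 : MemLp g 2 μ) :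
    ∫ a, f a * g a ∂μ ≤ Real.sqrt (∫ a, f a ^ 2 ∂μ) * Real.sqrt (∫ a, g a ^ 2 ∂μ) := by
  have hpq : Real.HolderConjugate 2 2 := ⟨by norm_num, by norm_num, by norm_num⟩
  have h2 : ENNReal.ofReal (2:ℝ) = 2 := ENNReal.ofReal_ofNat 2
  have h := integral_mul_le_Lp_mul_Lq_of_nonneg hpq hf hg (by rwa [h2]) (by rwa [h2])
  have hc : ∀ x : ℝ, x ^ (2:ℝ) = x ^ (2:ℕ) := fun x => by
    rw [show (2:ℝ) = ((2:ℕ):ℝ) by norm_num, Real.rpow_natCast]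
  simp only [hc] at h
  calc ∫ a, f a * g a ∂μ
      ≤ (∫ a, f a ^ 2 ∂μ) ^ ((1:ℝ)/2) * (∫ a, g a ^ 2 ∂μ) ^ ((1:ℝ)/2) := by
        simpa using h
    _ = Real.sqrt (∫ a, f a ^ 2 ∂μ) * Real.sqrt (∫ a, g a ^ 2 ∂μ) := by
        rw [Real.sqrt_eq_rpow, Real.sqrt_eq_rpow]

/-- Exact value/bound for the exponential integral. -/
private lemma exp_integral_Ioc {m : ℝ} (hm : 0 < m) {c : ℝ} (hc : 0 ≤ c) :
    ∫ τ in Ioc (0:ℝ) c, Real.exp (m * τ) ≤ Real.exp (m * c) / m := by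
  rw [← intervalIntegral.integral_of_le hc]
  have h := intervalIntegral.smul_integral_comp_mul_left (a := (0:ℝ)) (b := c) Real.exp m
  rw [integral_exp, smul_eq_mul] at h
  have hI : (∫ x in (0:ℝ)..c, Real.exp (m * x))
      = (Real.exp (m*c) - Real.exp (m*0))/m := by
    rw [eq_div_iff hm.ne', mul_comm]; exact h
  rw [hI, mul_zero, Real.exp_zero]
  have h1 : (0:ℝ) < Real.exp (m*c) := Real.exp_pos _
  rw [div_le_div_iff₀ hm hm]
  nlinarith

set_option maxHeartbeats 1600000 in
private theorem w1_weighted_estimate_aux {n : ℕ} (m : ℝ) (hm : 0 < m)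
    (l : ℝ → ℝ → EuclideanSpace ℝ (Fin n))
    (hl : MemLp (fun p : ℝ × ℝ => l p.1 p.2) 2 (volume.restrict Q))
    (zx : ℝ → ℝ → EuclideanSpace ℝ (Fin n))
    (hzx : ∀ s t, zx s t = ∫ τ in (0:ℝ)..t, l s τ)
    (w1 : ℝ → ℝ → ℝ)
    (hw1 : ∀ x y, w1 x y = ∫ s in (0:ℝ)..x, ∫ t in (0:ℝ)..y, ‖zx s t‖) :
    wnormR m w1 ≤ (2 / m) * wnorm m l := by
  set ν : Measure ℝ := volume.restrict (Ioc (0:ℝ) 1) with hνdef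
  have hmemν : ∀ᵐ s ∂ν, s ∈ Ioc (0:ℝ) 1 := by
    rw [hνdef]; exact ae_restrict_mem measurableSet_Ioc
  -- identify the measure on Q with a product measure
  have hQprod : (volume : Measure (ℝ × ℝ)).restrict Q = ν.prod ν := by
    rw [show Q = Icc (0:ℝ) 1 ×ˢ Icc (0:ℝ) 1 from rfl, Measure.volume_eq_prod,
      ← Measure.prod_restrict,
      ← Measure.restrict_congr_set (Ioc_ae_eq_Icc (α := ℝ) (a := 0) (b := 1)), hνdef]
  have hl2 : MemLp (fun p : ℝ × ℝ => l p.1 p.2) 2 (ν.prod ν) := by rw [← hQprod]; exact hl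
  have hsq : Integrable (fun p : ℝ × ℝ => ‖l p.1 p.2‖ ^ 2) (ν.prod ν) := by
    have h := hl2.integrable_norm_rpow (by norm_num) (by norm_num)
    have hc : ∀ x : ℝ, x ^ (ENNReal.toReal 2) = x ^ (2:ℕ) := fun x => by
      rw [show (ENNReal.toReal 2) = ((2:ℕ):ℝ) by simp, Real.rpow_natCast]
    simpa only [hc] using h
  set W : ℝ × ℝ → ℝ := fun p => Real.exp (-m * (p.1 + p.2)) * ‖l p.1 p.2‖ ^ 2 with hWdef
  have hWmeas : AEStronglyMeasurable W (ν.prod ν) :=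
    ((Real.continuous_exp.comp
      (continuous_const.mul (continuous_fst.add continuous_snd))).aestronglyMeasurable).mul hsq.1
  have haeQ : ∀ᵐ p ∂(ν.prod ν), p ∈ Ioc (0:ℝ) 1 ×ˢ Ioc (0:ℝ) 1 := by
    rw [hνdef, Measure.prod_restrict]
    exact ae_restrict_mem (measurableSet_Ioc.prod measurableSet_Ioc)
  have hWint : Integrable W (ν.prod ν) := by
    refine hsq.mono' hWmeas ?_
    filter_upwards [haeQ] with p hp
    have h1 : (0:ℝ) < p.1 := hp.1.1
    have h2 : (0:ℝ) < p.2 := hp.2.1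
    have hexp : Real.exp (-m * (p.1 + p.2)) ≤ 1 := by
      rw [Real.exp_le_one_iff]; nlinarith
    have hWp : ‖W p‖ = Real.exp (-m * (p.1 + p.2)) * ‖l p.1 p.2‖ ^ 2 := by
      rw [Real.norm_eq_abs, abs_of_nonneg (by positivity)]
    rw [hWp]
    nlinarith [sq_nonneg ‖l p.1 p.2‖, Real.exp_pos (-m * (p.1 + p.2))]
  set G : ℝ → ℝ := fun s => ∫ τ, Real.exp (-m * τ) * ‖l s τ‖ ^ 2 ∂ν with hGdef
  have hG0 : ∀ s, 0 ≤ G s := fun s => integral_nonneg fun τ => by positivity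
  have hWfiber : ∀ s : ℝ, (fun t => W (s, t)) =
      fun t => Real.exp (-m * s) * (Real.exp (-m * t) * ‖l s t‖ ^ 2) := by
    intro s; funext t
    show Real.exp (-m * (s + t)) * ‖l s t‖ ^ 2 = _
    rw [show -m * (s + t) = -m * s + -m * t by ring, Real.exp_add, mul_assoc]
  have hWG : ∀ s : ℝ, (∫ t, W (s, t) ∂ν) = Real.exp (-m * s) * G s := by
    intro s; rw [hWfiber s]; exact integral_const_mul _ _
  have hGν : Integrable (fun s => Real.exp (-m * s) * G s) ν := by
    have h := hWint.integral_prod_left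
    simpa only [hWG] using h
  have hA0 : (0:ℝ) ≤ ∫ s, Real.exp (-m * s) * G s ∂ν :=
    integral_nonneg fun s => mul_nonneg (Real.exp_pos _).le (hG0 s)
  set A : ℝ := ∫ s, Real.exp (-m * s) * G s ∂ν with hAdef
  have hwnormA : wnorm m l = A ^ ((1:ℝ)/2) := by
    unfold wnorm
    congr 1
    have hx : ∀ x : ℝ, (∫ y in (0:ℝ)..1, Real.exp (-m * (x + y)) * ‖l x y‖ ^ 2)
        = Real.exp (-m * x) * G x := by
      intro x
      rw [intervalIntegral.integral_of_le zero_le_one, ← hνdef]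
      exact hWG x
    simp only [hx]
    rw [intervalIntegral.integral_of_le zero_le_one, ← hνdef, hAdef]
  -- integrability of √G
  have hGint : Integrable G ν := by
    have hGrw : G = fun s => Real.exp (m * s) * (Real.exp (-m * s) * G s) := by
      funext s; rw [← mul_assoc, ← Real.exp_add]
      rw [show m * s + -m * s = 0 by ring, Real.exp_zero, one_mul]
    refine (hGν.const_mul (Real.exp m)).mono' ?_ ?_
    · rw [hGrw]
      exact ((Real.continuous_exp.comp
        (continuous_const.mul continuous_id)).aestronglyMeasurable).mul hGν.1
    · filter_upwards [hmemν] with s hs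
      have h1 : Real.exp (m * s) ≤ Real.exp m := by
        apply Real.exp_le_exp.2; nlinarith [hs.2]
      have h2 : (0:ℝ) ≤ Real.exp (-m * s) * G s := mul_nonneg (Real.exp_pos _).le (hG0 s)
      rw [Real.norm_eq_abs, abs_of_nonneg (hG0 s)]
      calc G s = Real.exp (m * s) * (Real.exp (-m * s) * G s) := by
            rw [← mul_assoc, ← Real.exp_add, show m * s + -m * s = 0 by ring,
              Real.exp_zero, one_mul]
        _ ≤ Real.exp m * (Real.exp (-m * s) * G s) := mul_le_mul_of_nonneg_right h1 h2
  have hsqrtG_int : Integrable (fun s => Real.sqrt (G s)) ν := by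
    have hconst : Integrable (fun _ : ℝ => (1:ℝ)) ν := by
      rw [hνdef]
      exact integrableOn_const measure_Ioc_lt_top.ne
    refine ((hconst.add hGint).div_const 2).mono'
      (Real.continuous_sqrt.comp_aestronglyMeasurable hGint.1) ?_
    refine Eventually.of_forall fun s => ?_
    rw [Real.norm_eq_abs, abs_of_nonneg (Real.sqrt_nonneg _)]
    have h1 := Real.sq_sqrt (hG0 s)
    have h2 := sq_nonneg (Real.sqrt (G s) - 1)
    show Real.sqrt (G s) ≤ (1 + G s) / 2
    nlinarith [Real.sqrt_nonneg (G s)]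
  -- key a.e. bound in s
  have key : ∀ᵐ s ∂ν, ∀ y ∈ Icc (0:ℝ) 1,
      (∫ t in (0:ℝ)..y, ‖zx s t‖) ≤ Real.sqrt (Real.exp (m * y) / m) * Real.sqrt (G s) := by
    filter_upwards [hsq.prod_right_ae] with s hs
    -- hs : Integrable (fun t => ‖l s t‖ ^ 2) ν
    have hlmeas : AEStronglyMeasurable (fun t => ‖l s t‖) ν := by
      have h : (fun t : ℝ => ‖l s t‖) = fun t => Real.sqrt (‖l s t‖ ^ 2) := by
        funext t; rw [Real.sqrt_sq (norm_nonneg _)]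
      rw [h]; exact Real.continuous_sqrt.comp_aestronglyMeasurable hs.1
    have hweighted : Integrable (fun t => Real.exp (-m * t) * ‖l s t‖ ^ 2) ν := by
      refine hs.mono' (((Real.continuous_exp.comp
        (continuous_const.mul continuous_id)).aestronglyMeasurable).mul hs.1) ?_
      filter_upwards [hmemν] with t ht
      have h1 : Real.exp (-m * t) ≤ 1 := by
        rw [Real.exp_le_one_iff]; nlinarith [ht.1]
      rw [Real.norm_eq_abs, abs_of_nonneg (by positivity)]
      nlinarith [sq_nonneg ‖l s t‖, Real.exp_pos (-m * t)]
    intro y hy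
    -- pointwise bound on ‖zx s t‖ for t ∈ (0, y]
    have hzxbound : ∀ t ∈ Ioc (0:ℝ) y,
        ‖zx s t‖ ≤ Real.sqrt (Real.exp (m * y) / m) * Real.sqrt (G s) := by
      intro t ht
      have ht0 : (0:ℝ) ≤ t := ht.1.le
      have hty : t ≤ y := ht.2
      have ht1 : t ≤ 1 := hty.trans hy.2
      rw [hzx s t]
      have hfg : ∀ τ : ℝ, ‖l s τ‖ = Real.exp (m * τ / 2) * (Real.exp (-(m * τ) / 2) * ‖l s τ‖) := by
        intro τ
        rw [← mul_assoc, ← Real.exp_add, show m * τ / 2 + -(m * τ) / 2 = 0 by ring,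
          Real.exp_zero, one_mul]
      have hsub : Ioc (0:ℝ) t ⊆ Ioc (0:ℝ) 1 := Ioc_subset_Ioc_right ht1
      have hrestr_le : volume.restrict (Ioc (0:ℝ) t) ≤ ν := by
        rw [hνdef]; exact Measure.restrict_mono hsub le_rfl
      have hmemf : MemLp (fun τ => Real.exp (m * τ / 2)) 2 (volume.restrict (Ioc (0:ℝ) t)) := by
        refine (memLp_two_iff_integrable_sq
          (Continuous.aestronglyMeasurable (by fun_prop))).2 ?_
        have hcont : Continuous fun τ : ℝ => Real.exp (m * τ / 2) ^ 2 := by fun_prop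
        exact hcont.integrableOn_Ioc
      have hg2 : Integrable (fun τ => (Real.exp (-(m * τ) / 2) * ‖l s τ‖) ^ 2)
          (volume.restrict (Ioc (0:ℝ) t)) := by
        have heq : (fun τ => (Real.exp (-(m * τ) / 2) * ‖l s τ‖) ^ 2)
            = fun τ => Real.exp (-m * τ) * ‖l s τ‖ ^ 2 := by
          funext τ
          rw [mul_pow, pow_two (Real.exp _), ← Real.exp_add,
            show -(m * τ) / 2 + -(m * τ) / 2 = -m * τ by ring]
        rw [heq]
        exact hweighted.mono_measure hrestr_le
      have hgmeas : AEStronglyMeasurable (fun τ => Real.exp (-(m * τ) / 2) * ‖l s τ‖)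
          (volume.restrict (Ioc (0:ℝ) t)) := by
        exact (Continuous.aestronglyMeasurable (by fun_prop : Continuous
          (fun τ : ℝ => Real.exp (-(m * τ) / 2)))).mul (hlmeas.mono_measure hrestr_le)
      have hmemg : MemLp (fun τ => Real.exp (-(m * τ) / 2) * ‖l s τ‖) 2
          (volume.restrict (Ioc (0:ℝ) t)) := (memLp_two_iff_integrable_sq hgmeas).2 hg2
      calc ‖∫ τ in (0:ℝ)..t, l s τ‖
          ≤ ∫ τ in (0:ℝ)..t, ‖l s τ‖ := intervalIntegral.norm_integral_le_integral_norm ht0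
        _ = ∫ τ in Ioc (0:ℝ) t, ‖l s τ‖ := intervalIntegral.integral_of_le ht0
        _ = ∫ τ in Ioc (0:ℝ) t, Real.exp (m * τ / 2) * (Real.exp (-(m * τ) / 2) * ‖l s τ‖) :=
            integral_congr_ae (Eventually.of_forall fun τ => hfg τ)
        _ ≤ Real.sqrt (∫ τ in Ioc (0:ℝ) t, Real.exp (m * τ / 2) ^ 2)
            * Real.sqrt (∫ τ in Ioc (0:ℝ) t, (Real.exp (-(m * τ) / 2) * ‖l s τ‖) ^ 2) := by
            refine cs_helper (Eventually.of_forall fun τ => (Real.exp_pos _).le)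
              (Eventually.of_forall fun τ => mul_nonneg (Real.exp_pos _).le (norm_nonneg _))
              hmemf hmemg
        _ ≤ Real.sqrt (Real.exp (m * y) / m) * Real.sqrt (G s) := by
            refine mul_le_mul (Real.sqrt_le_sqrt ?_) (Real.sqrt_le_sqrt ?_)
              (Real.sqrt_nonneg _) (Real.sqrt_nonneg _)
            · have heq : (fun τ : ℝ => Real.exp (m * τ / 2) ^ 2) = fun τ => Real.exp (m * τ) := by
                funext τ
                rw [pow_two, ← Real.exp_add, show m * τ / 2 + m * τ / 2 = m * τ by ring]
              rw [heq]
              refine (exp_integral_Ioc hm ht0).trans ?_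
              have : Real.exp (m * t) ≤ Real.exp (m * y) := by
                apply Real.exp_le_exp.2; nlinarith
              exact (div_le_div_iff_of_pos_right hm).2 this
            · have heq : (fun τ => (Real.exp (-(m * τ) / 2) * ‖l s τ‖) ^ 2)
                  = fun τ => Real.exp (-m * τ) * ‖l s τ‖ ^ 2 := by
                funext τ
                rw [mul_pow, pow_two (Real.exp _), ← Real.exp_add,
                  show -(m * τ) / 2 + -(m * τ) / 2 = -m * τ by ring]
              rw [heq]
              rw [hGdef, hνdef]
              refine setIntegral_mono_set (by rw [hνdef] at hweighted; exact hweighted)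
                (Eventually.of_forall fun τ => by positivity)
                (HasSubset.Subset.eventuallyLE hsub)
    -- integrate the pointwise bound in t
    rw [intervalIntegral.integral_of_le hy.1]
    have hconst_int : Integrable (fun _ : ℝ => Real.sqrt (Real.exp (m * y) / m) * Real.sqrt (G s))
        (volume.restrict (Ioc (0:ℝ) y)) := integrableOn_const measure_Ioc_lt_top.ne
    calc (∫ t in Ioc (0:ℝ) y, ‖zx s t‖)
        ≤ ∫ _t in Ioc (0:ℝ) y, Real.sqrt (Real.exp (m * y) / m) * Real.sqrt (G s) := by
          refine integral_mono_of_nonneg (Eventually.of_forall fun t => norm_nonneg _)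
            hconst_int ?_
          filter_upwards [ae_restrict_mem measurableSet_Ioc] with t ht
          exact hzxbound t ht
      _ = (volume (Ioc (0:ℝ) y)).toReal * (Real.sqrt (Real.exp (m * y) / m) * Real.sqrt (G s)) := by
          rw [setIntegral_const, smul_eq_mul]; rfl
      _ ≤ 1 * (Real.sqrt (Real.exp (m * y) / m) * Real.sqrt (G s)) := by
          refine mul_le_mul_of_nonneg_right ?_
            (mul_nonneg (Real.sqrt_nonneg _) (Real.sqrt_nonneg _))
          rw [Real.volume_Ioc]
          rw [ENNReal.toReal_ofReal (by linarith [hy.1])]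
          linarith [hy.2]
      _ = Real.sqrt (Real.exp (m * y) / m) * Real.sqrt (G s) := one_mul _
  -- Cauchy–Schwarz in s
  have step3 : ∀ x ∈ Icc (0:ℝ) 1,
      (∫ s in Ioc (0:ℝ) x, Real.sqrt (G s)) ≤ Real.sqrt (Real.exp (m * x) / m) * Real.sqrt A := by
    intro x hx
    have hsub : Ioc (0:ℝ) x ⊆ Ioc (0:ℝ) 1 := Ioc_subset_Ioc_right hx.2
    have hrestr_le : volume.restrict (Ioc (0:ℝ) x) ≤ ν := by
      rw [hνdef]; exact Measure.restrict_mono hsub le_rfl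
    have hfg : ∀ s : ℝ, Real.sqrt (G s)
        = Real.exp (m * s / 2) * (Real.exp (-(m * s) / 2) * Real.sqrt (G s)) := by
      intro s
      rw [← mul_assoc, ← Real.exp_add, show m * s / 2 + -(m * s) / 2 = 0 by ring,
        Real.exp_zero, one_mul]
    have hmemf : MemLp (fun s => Real.exp (m * s / 2)) 2 (volume.restrict (Ioc (0:ℝ) x)) := by
      refine (memLp_two_iff_integrable_sq
        (Continuous.aestronglyMeasurable (by fun_prop))).2 ?_
      have hcont : Continuous fun s : ℝ => Real.exp (m * s / 2) ^ 2 := by fun_prop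
      exact hcont.integrableOn_Ioc
    have hg2 : Integrable (fun s => (Real.exp (-(m * s) / 2) * Real.sqrt (G s)) ^ 2)
        (volume.restrict (Ioc (0:ℝ) x)) := by
      have heq : (fun s => (Real.exp (-(m * s) / 2) * Real.sqrt (G s)) ^ 2)
          =ᵐ[volume.restrict (Ioc (0:ℝ) x)] fun s => Real.exp (-m * s) * G s := by
        refine Eventually.of_forall fun s => ?_
        show (Real.exp (-(m * s) / 2) * Real.sqrt (G s)) ^ 2 = Real.exp (-m * s) * G s
        rw [mul_pow, Real.sq_sqrt (hG0 s), pow_two (Real.exp _), ← Real.exp_add,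
          show -(m * s) / 2 + -(m * s) / 2 = -m * s by ring]
      exact (Integrable.congr (hGν.mono_measure hrestr_le) heq.symm)
    have hgmeas : AEStronglyMeasurable (fun s => Real.exp (-(m * s) / 2) * Real.sqrt (G s))
        (volume.restrict (Ioc (0:ℝ) x)) := by
      exact (Continuous.aestronglyMeasurable (by fun_prop : Continuous
        (fun s : ℝ => Real.exp (-(m * s) / 2)))).mul
        ((Real.continuous_sqrt.comp_aestronglyMeasurable (hGint.1)).mono_measure hrestr_le)
    have hmemg : MemLp (fun s => Real.exp (-(m * s) / 2) * Real.sqrt (G s)) 2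
        (volume.restrict (Ioc (0:ℝ) x)) := (memLp_two_iff_integrable_sq hgmeas).2 hg2
    calc (∫ s in Ioc (0:ℝ) x, Real.sqrt (G s))
        = ∫ s in Ioc (0:ℝ) x, Real.exp (m * s / 2) * (Real.exp (-(m * s) / 2) * Real.sqrt (G s)) :=
          integral_congr_ae (Eventually.of_forall fun s => hfg s)
      _ ≤ Real.sqrt (∫ s in Ioc (0:ℝ) x, Real.exp (m * s / 2) ^ 2)
          * Real.sqrt (∫ s in Ioc (0:ℝ) x, (Real.exp (-(m * s) / 2) * Real.sqrt (G s)) ^ 2) := by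
          refine cs_helper (Eventually.of_forall fun s => (Real.exp_pos _).le)
            (Eventually.of_forall fun s => mul_nonneg (Real.exp_pos _).le (Real.sqrt_nonneg _))
            hmemf hmemg
      _ ≤ Real.sqrt (Real.exp (m * x) / m) * Real.sqrt A := by
          refine mul_le_mul (Real.sqrt_le_sqrt ?_) (Real.sqrt_le_sqrt ?_)
            (Real.sqrt_nonneg _) (Real.sqrt_nonneg _)
          · have heq : (fun s : ℝ => Real.exp (m * s / 2) ^ 2) = fun s => Real.exp (m * s) := by
              funext s
              rw [pow_two, ← Real.exp_add, show m * s / 2 + m * s / 2 = m * s by ring]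
            rw [heq]
            exact exp_integral_Ioc hm hx.1
          · have heq : (fun s => (Real.exp (-(m * s) / 2) * Real.sqrt (G s)) ^ 2)
                = fun s => Real.exp (-m * s) * G s := by
              funext s
              rw [mul_pow, Real.sq_sqrt (hG0 s), pow_two (Real.exp _), ← Real.exp_add,
                show -(m * s) / 2 + -(m * s) / 2 = -m * s by ring]
            rw [heq, hAdef, hνdef]
            refine setIntegral_mono_set (by rw [hνdef] at hGν; exact hGν)
              (Eventually.of_forall fun s => mul_nonneg (Real.exp_pos _).le (hG0 s))
              (HasSubset.Subset.eventuallyLE hsub)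
  -- bound on w1
  have w1bound : ∀ x ∈ Icc (0:ℝ) 1, ∀ y ∈ Icc (0:ℝ) 1,
      w1 x y ≤ Real.sqrt (Real.exp (m * y) / m)
        * (Real.sqrt (Real.exp (m * x) / m) * Real.sqrt A) := by
    intro x hx y hy
    have hsub : Ioc (0:ℝ) x ⊆ Ioc (0:ℝ) 1 := Ioc_subset_Ioc_right hx.2
    have hrestr_le : volume.restrict (Ioc (0:ℝ) x) ≤ ν := by
      rw [hνdef]; exact Measure.restrict_mono hsub le_rfl
    rw [hw1, intervalIntegral.integral_of_le hx.1]
    calc (∫ s in Ioc (0:ℝ) x, ∫ t in (0:ℝ)..y, ‖zx s t‖)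
        ≤ ∫ s in Ioc (0:ℝ) x, Real.sqrt (Real.exp (m * y) / m) * Real.sqrt (G s) := by
          refine integral_mono_of_nonneg
            (Eventually.of_forall fun s =>
              intervalIntegral.integral_nonneg hy.1 fun t _ => norm_nonneg _)
            ((hsqrtG_int.mono_measure hrestr_le).const_mul _) ?_
          have hkey' : ∀ᵐ s ∂(volume.restrict (Ioc (0:ℝ) x)), ∀ y' ∈ Icc (0:ℝ) 1,
              (∫ t in (0:ℝ)..y', ‖zx s t‖)
                ≤ Real.sqrt (Real.exp (m * y') / m) * Real.sqrt (G s) := by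
            rw [hνdef] at key
            exact ae_restrict_of_ae_restrict_of_subset hsub key
          filter_upwards [hkey'] with s hskey
          exact hskey y hy
      _ = Real.sqrt (Real.exp (m * y) / m) * ∫ s in Ioc (0:ℝ) x, Real.sqrt (G s) :=
          integral_const_mul _ _
      _ ≤ Real.sqrt (Real.exp (m * y) / m)
          * (Real.sqrt (Real.exp (m * x) / m) * Real.sqrt A) :=
          mul_le_mul_of_nonneg_left (step3 x hx) (Real.sqrt_nonneg _)
  -- pointwise bound on the weighted square of w1
  have hptw : ∀ x ∈ Icc (0:ℝ) 1, ∀ y ∈ Icc (0:ℝ) 1,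
      Real.exp (-m * (x + y)) * |w1 x y| ^ 2 ≤ A / m ^ 2 := by
    intro x hx y hy
    have h0 : 0 ≤ w1 x y := by
      rw [hw1]
      exact intervalIntegral.integral_nonneg hx.1 fun s _ =>
        intervalIntegral.integral_nonneg hy.1 fun t _ => norm_nonneg _
    have h1 := w1bound x hx y hy
    rw [abs_of_nonneg h0]
    have hay : (0:ℝ) ≤ Real.exp (m * y) / m := by positivity
    have hax : (0:ℝ) ≤ Real.exp (m * x) / m := by positivity
    have h2 : w1 x y ^ 2 ≤ (Real.exp (m * y) / m) * ((Real.exp (m * x) / m) * A) := by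
      calc w1 x y ^ 2
          ≤ (Real.sqrt (Real.exp (m * y) / m)
            * (Real.sqrt (Real.exp (m * x) / m) * Real.sqrt A)) ^ 2 := by
            exact pow_le_pow_left₀ h0 h1 2
        _ = (Real.exp (m * y) / m) * ((Real.exp (m * x) / m) * A) := by
            rw [mul_pow, mul_pow, Real.sq_sqrt hay, Real.sq_sqrt hax, Real.sq_sqrt hA0]
    have he : Real.exp (-m * (x + y)) * Real.exp (m * y) * Real.exp (m * x) = 1 := by
      rw [← Real.exp_add, ← Real.exp_add, show -m * (x + y) + m * y + m * x = 0 by ring,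
        Real.exp_zero]
    calc Real.exp (-m * (x + y)) * w1 x y ^ 2
        ≤ Real.exp (-m * (x + y)) * ((Real.exp (m * y) / m) * ((Real.exp (m * x) / m) * A)) :=
          mul_le_mul_of_nonneg_left h2 (Real.exp_pos _).le
      _ = (Real.exp (-m * (x + y)) * Real.exp (m * y) * Real.exp (m * x)) * A / m ^ 2 := by
          ring
      _ = A / m ^ 2 := by rw [he, one_mul]
  -- integrate the pointwise bound
  have hAm0 : (0:ℝ) ≤ A / m ^ 2 := by positivity
  have hinner_nonneg : ∀ x : ℝ,
      0 ≤ ∫ y in (0:ℝ)..1, Real.exp (-m * (x + y)) * |w1 x y| ^ 2 := fun x =>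
    intervalIntegral.integral_nonneg zero_le_one fun y _ => by positivity
  have hI : (∫ x in (0:ℝ)..1, ∫ y in (0:ℝ)..1, Real.exp (-m * (x + y)) * |w1 x y| ^ 2)
      ≤ A / m ^ 2 := by
    rw [intervalIntegral.integral_of_le zero_le_one]
    have hconst_int : Integrable (fun _ : ℝ => A / m ^ 2)
        (volume.restrict (Ioc (0:ℝ) 1)) := integrableOn_const measure_Ioc_lt_top.ne
    calc (∫ x in Ioc (0:ℝ) 1, ∫ y in (0:ℝ)..1, Real.exp (-m * (x + y)) * |w1 x y| ^ 2)
        ≤ ∫ _x in Ioc (0:ℝ) 1, A / m ^ 2 := by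
          refine integral_mono_of_nonneg (Eventually.of_forall hinner_nonneg) hconst_int ?_
          filter_upwards [ae_restrict_mem measurableSet_Ioc] with x hx
          have hx' : x ∈ Icc (0:ℝ) 1 := ⟨hx.1.le, hx.2⟩
          rw [intervalIntegral.integral_of_le zero_le_one]
          calc (∫ y in Ioc (0:ℝ) 1, Real.exp (-m * (x + y)) * |w1 x y| ^ 2)
              ≤ ∫ _y in Ioc (0:ℝ) 1, A / m ^ 2 := by
                refine integral_mono_of_nonneg
                  (Eventually.of_forall fun y => by positivity) hconst_int ?_
                filter_upwards [ae_restrict_mem measurableSet_Ioc] with y hy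
                exact hptw x hx' y ⟨hy.1.le, hy.2⟩
            _ = A / m ^ 2 := by
                rw [setIntegral_const, smul_eq_mul, Real.volume_real_Ioc]
                norm_num
      _ = A / m ^ 2 := by
          rw [setIntegral_const, smul_eq_mul, Real.volume_real_Ioc]
          norm_num
  -- conclude
  have houter_nonneg : (0:ℝ)
      ≤ ∫ x in (0:ℝ)..1, ∫ y in (0:ℝ)..1, Real.exp (-m * (x + y)) * |w1 x y| ^ 2 :=
    intervalIntegral.integral_nonneg zero_le_one fun x _ => hinner_nonneg x
  unfold wnormR
  rw [hwnormA]
  calc (∫ x in (0:ℝ)..1, ∫ y in (0:ℝ)..1, Real.exp (-m * (x + y)) * |w1 x y| ^ 2) ^ ((1:ℝ)/2)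
      ≤ (A / m ^ 2) ^ ((1:ℝ)/2) := Real.rpow_le_rpow houter_nonneg hI (by norm_num)
    _ = Real.sqrt (A / m ^ 2) := (Real.sqrt_eq_rpow _).symm
    _ = Real.sqrt A / m := by
        rw [Real.sqrt_div hA0, Real.sqrt_sq hm.le]
    _ = (1 / m) * A ^ ((1:ℝ)/2) := by
        rw [Real.sqrt_eq_rpow]; ring
    _ ≤ (2 / m) * A ^ ((1:ℝ)/2) := by
        have hA12 : (0:ℝ) ≤ A ^ ((1:ℝ)/2) := by
          rw [← Real.sqrt_eq_rpow]; exact Real.sqrt_nonneg _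
        have h12 : (1:ℝ) / m ≤ 2 / m := (div_le_div_iff_of_pos_right hm).2 one_le_two
        exact mul_le_mul_of_nonneg_right h12 hA12


/-- Lemma 3.1, inequality (3.3): for `z ∈ AC₀²(Q,ℝⁿ)`,
`w₁(x,y) = ∫₀ˣ∫₀ʸ |z_x(s,t)| ds dt` with `z_x(s,t) = ∫₀ᵗ z_{xy}(s,τ) dτ` satisfies
`‖w₁‖_{L²_m} ≤ (2/m)‖z‖_{AC₀²,m}`. -/
theorem w1_weighted_estimate {n : ℕ} (m : ℝ) (hm : 0 < m)
    (l : ℝ → ℝ → EuclideanSpace ℝ (Fin n))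
    (hl : MemLp (fun p : ℝ × ℝ => l p.1 p.2) 2 (volume.restrict Q))
    (zx : ℝ → ℝ → EuclideanSpace ℝ (Fin n))
    (hzx : ∀ s t, zx s t = ∫ τ in (0:ℝ)..t, l s τ)
    (w1 : ℝ → ℝ → ℝ)
    (hw1 : ∀ x y, w1 x y = ∫ s in (0:ℝ)..x, ∫ t in (0:ℝ)..y, ‖zx s t‖) :
    wnormR m w1 ≤ (2 / m) * wnorm m l :=
  w1_weighted_estimate_aux m hm l hl zx hzx w1 hw1
end

section
/- Let z ∈ AC₀²(Q,ℝⁿ) and define w₂(x,y) = ∫₀ˣ∫₀ʸ |z_y(s,t)| ds dt, where z_y(s,t) = ∫₀ˢ z_{xy}(σ,t) dσ. Then for every m>0, ‖w₂‖_{L²_m} ≤ (2/m) ‖z‖_{AC₀²,m}. -/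
open MeasureTheory Set Real

lemma cs_aux {α : Type*} [MeasurableSpace α] {μ : Measure α} {f g : α → ℝ}
    (hf0 : ∀ a, 0 ≤ f a) (hg0 : ∀ a, 0 ≤ g a)
    (hf2 : Integrable (fun a => f a ^ 2) μ) (hg2 : Integrable (fun a => g a ^ 2) μ) :
    ∫ a, f a * g a ∂μ ≤ Real.sqrt (∫ a, f a ^ 2 ∂μ) * Real.sqrt (∫ a, g a ^ 2 ∂μ) := by
  set B := ∫ a, f a ^ 2 ∂μ with hB
  set C := ∫ a, g a ^ 2 ∂μ with hC
  have hBnn : 0 ≤ B := integral_nonneg fun a => sq_nonneg _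
  have hCnn : 0 ≤ C := integral_nonneg fun a => sq_nonneg _
  have key : ∀ ε : ℝ, 0 < ε → ∫ a, f a * g a ∂μ ≤ ε / 2 * B + 1 / (2 * ε) * C := by
    intro ε hε
    have hint : Integrable (fun a => ε / 2 * f a ^ 2 + 1 / (2 * ε) * g a ^ 2) μ :=
      (hf2.const_mul _).add (hg2.const_mul _)
    calc ∫ a, f a * g a ∂μ ≤ ∫ a, (ε / 2 * f a ^ 2 + 1 / (2 * ε) * g a ^ 2) ∂μ := by
          apply integral_mono_of_nonneg (Filter.Eventually.of_forall fun a => mul_nonneg (hf0 a) (hg0 a))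
            hint
          refine Filter.Eventually.of_forall fun a => ?_
          rw [← sub_nonneg]
          have heq : ε / 2 * f a ^ 2 + 1 / (2 * ε) * g a ^ 2 - f a * g a
              = (ε * f a - g a) ^ 2 / (2 * ε) := by
            field_simp; ring
          rw [heq]; positivity
      _ = ε / 2 * B + 1 / (2 * ε) * C := by
          rw [integral_add (hf2.const_mul _) (hg2.const_mul _), integral_const_mul,
            integral_const_mul]
  rcases eq_or_lt_of_le hBnn with hB0 | hBpos
  · have h0 : ∫ a, f a * g a ∂μ ≤ 0 := by
      have htend : Filter.Tendsto (fun ε : ℝ => ε / 2 * B + 1 / (2 * ε) * C)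
          Filter.atTop (nhds 0) := by
        rw [← hB0]
        simp only [mul_zero, zero_mul, zero_add]
        have : Filter.Tendsto (fun ε : ℝ => 1 / (2 * ε)) Filter.atTop (nhds 0) := by
          apply Filter.Tendsto.div_atTop tendsto_const_nhds
          exact Filter.tendsto_atTop_mono (fun x => by linarith [le_abs_self x])
            (Filter.tendsto_atTop_mono (fun x => le_refl x) Filter.tendsto_id) |>.const_mul_atTop two_pos
        simpa using this.mul_const C
      exact ge_of_tendsto htend (Filter.eventually_atTop.2 ⟨1, fun ε hε => key ε (by linarith)⟩)
    exact h0.trans (mul_nonneg (Real.sqrt_nonneg _) (Real.sqrt_nonneg _))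
  · rcases eq_or_lt_of_le hCnn with hC0 | hCpos
    · have h0 : ∫ a, f a * g a ∂μ ≤ 0 := by
        have htend : Filter.Tendsto (fun ε : ℝ => ε / 2 * B + 1 / (2 * ε) * C)
            (nhdsWithin 0 (Ioi 0)) (nhds 0) := by
          rw [← hC0]
          simp only [mul_zero, add_zero]
          have : Filter.Tendsto (fun ε : ℝ => ε / 2 * B) (nhds 0) (nhds 0) := by
            have : Filter.Tendsto (fun ε : ℝ => ε / 2 * B) (nhds 0) (nhds (0 / 2 * B)) :=
              (((continuous_id).div_const 2).mul continuous_const).tendsto 0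
            simpa using this
          exact this.mono_left nhdsWithin_le_nhds
        refine ge_of_tendsto htend ?_
        filter_upwards [self_mem_nhdsWithin] with ε (hε : ε ∈ Ioi 0)
        exact key ε hε
      exact h0.trans (mul_nonneg (Real.sqrt_nonneg _) (Real.sqrt_nonneg _))
    · have hε : (0:ℝ) < Real.sqrt C / Real.sqrt B :=
        div_pos (Real.sqrt_pos.2 hCpos) (Real.sqrt_pos.2 hBpos)
      refine (key _ hε).trans_eq ?_
      have hsB : Real.sqrt B ^ 2 = B := Real.sq_sqrt hBnn
      have hsC : Real.sqrt C ^ 2 = C := Real.sq_sqrt hCnn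
      have hBne : Real.sqrt B ≠ 0 := (Real.sqrt_pos.2 hBpos).ne'
      have hCne : Real.sqrt C ≠ 0 := (Real.sqrt_pos.2 hCpos).ne'
      field_simp
      nlinarith [hsB, hsC, Real.sqrt_nonneg B, Real.sqrt_nonneg C]

lemma sqrt_le_one_add (a : ℝ) (ha : 0 ≤ a) : Real.sqrt a ≤ 1 + a := by
  nlinarith [Real.sq_sqrt ha, Real.sqrt_nonneg a]

lemma exp_integral_le {m x : ℝ} (hm : 0 < m) (hx : 0 ≤ x) :
    ∫ σ in Ioc (0:ℝ) x, Real.exp (m * σ) ≤ Real.exp (m * x) / m := by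
  rw [← intervalIntegral.integral_of_le hx]
  have h : (∫ σ in (0:ℝ)..x, Real.exp (m * σ)) = m⁻¹ * (Real.exp (m * x) - 1) := by
    have h2 := intervalIntegral.integral_comp_mul_left (a := (0:ℝ)) (b := x)
      (f := fun u => Real.exp u) (c := m) hm.ne'
    rw [h2, integral_exp]
    simp [smul_eq_mul]
  rw [h, inv_mul_eq_div]
  rw [div_le_div_iff₀ hm hm]
  nlinarith [Real.exp_pos (m * x)]

set_option maxHeartbeats 1000000 in
/-- Lemma 3.1, inequality (3.4): for `z ∈ AC₀²(Q,ℝⁿ)`,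
`w₂(x,y) = ∫₀ˣ∫₀ʸ |z_y(s,t)| ds dt` with `z_y(s,t) = ∫₀ˢ z_{xy}(σ,t) dσ` satisfies
`‖w₂‖_{L²_m} ≤ (2/m)‖z‖_{AC₀²,m}`. -/
theorem w2_weighted_estimate {n : ℕ} (m : ℝ) (hm : 0 < m)
    (l : ℝ → ℝ → EuclideanSpace ℝ (Fin n))
    (hl : MemLp (fun p : ℝ × ℝ => l p.1 p.2) 2 (volume.restrict Q))
    (zy : ℝ → ℝ → EuclideanSpace ℝ (Fin n))
    (hzy : ∀ s t, zy s t = ∫ σ in (0:ℝ)..s, l σ t)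
    (w2 : ℝ → ℝ → ℝ)
    (hw2 : ∀ x y, w2 x y = ∫ s in (0:ℝ)..x, ∫ t in (0:ℝ)..y, ‖zy s t‖) :
    wnormR m w2 ≤ (2 / m) * wnorm m l := by
  -- setup: replace Q by the product of Ioc restrictions
  have hIoc : (volume : Measure ℝ).restrict (Icc (0:ℝ) 1) = volume.restrict (Ioc (0:ℝ) 1) :=
    (Measure.restrict_congr_set Ioc_ae_eq_Icc).symm
  set μJ := (volume : Measure ℝ).restrict (Ioc (0:ℝ) 1) with hμJ
  have hQ : volume.restrict Q = μJ.prod μJ := by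
    rw [Q, Measure.volume_eq_prod, ← Measure.prod_restrict, hIoc]
  haveI : IsFiniteMeasure μJ := ⟨by rw [hμJ, Measure.restrict_apply_univ]; simp⟩
  rw [hQ] at hl
  have hli : Integrable (fun p : ℝ × ℝ => l p.1 p.2) (μJ.prod μJ) := hl.integrable one_le_two
  have hm1 : Integrable (fun p : ℝ × ℝ => ‖l p.1 p.2‖) (μJ.prod μJ) := hli.norm
  have hm2 : Integrable (fun p : ℝ × ℝ => ‖l p.1 p.2‖ ^ 2) (μJ.prod μJ) := hl.norm.integrable_sq
  have hw_mem : ∀ᵐ p : ℝ × ℝ ∂(μJ.prod μJ), p ∈ Ioc (0:ℝ) 1 ×ˢ Ioc (0:ℝ) 1 := by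
    rw [hμJ, Measure.prod_restrict]
    exact ae_restrict_mem (measurableSet_Ioc.prod measurableSet_Ioc)
  -- integrability of the weighted square on the product
  have hF : Integrable (fun p : ℝ × ℝ => Real.exp (-m * (p.1 + p.2)) * ‖l p.1 p.2‖ ^ 2)
      (μJ.prod μJ) := by
    have hcont : Continuous (fun p : ℝ × ℝ => Real.exp (-m * (p.1 + p.2))) := by continuity
    refine hm2.mono' (hcont.aestronglyMeasurable.mul hm2.1) ?_
    filter_upwards [hw_mem] with p hp
    have h1 : Real.exp (-m * (p.1 + p.2)) ≤ 1 := by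
      rw [Real.exp_le_one_iff]
      nlinarith [hp.1.1, hp.2.1]
    rw [Real.norm_eq_abs, abs_mul, abs_of_pos (Real.exp_pos _), abs_of_nonneg (sq_nonneg _)]
    nlinarith [sq_nonneg ‖l p.1 p.2‖, Real.exp_pos (-m * (p.1 + p.2))]
  -- the inner weighted integral in σ
  set h1 : ℝ → ℝ := fun t => ∫ σ, Real.exp (-m * σ) * ‖l σ t‖ ^ 2 ∂μJ with hh1def
  have hh1nn : ∀ t, 0 ≤ h1 t := fun t =>
    integral_nonneg fun σ => mul_nonneg (Real.exp_pos _).le (sq_nonneg _)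
  have hsplit : ∀ σ t : ℝ, Real.exp (-m * (σ + t)) = Real.exp (-m * t) * Real.exp (-m * σ) := by
    intro σ t; rw [← Real.exp_add]; congr 1; ring
  have hFt : (fun t => ∫ σ, Real.exp (-m * (σ + t)) * ‖l σ t‖ ^ 2 ∂μJ)
      = fun t => Real.exp (-m * t) * h1 t := by
    funext t
    rw [hh1def, ← integral_const_mul]
    congr 1; funext σ
    rw [hsplit σ t, mul_assoc]
  have hAint : Integrable (fun t => Real.exp (-m * t) * h1 t) μJ := by
    have h := hF.integral_prod_right
    rwa [show (fun y => ∫ x, Real.exp (-m * (x + y)) * ‖l x y‖ ^ 2 ∂μJ)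
        = fun t => Real.exp (-m * t) * h1 t from hFt] at h
  set A := ∫ t, Real.exp (-m * t) * h1 t ∂μJ with hA
  have hApos : 0 ≤ A :=
    integral_nonneg fun t => mul_nonneg (Real.exp_pos _).le (hh1nn t)
  -- identify wnorm with √A
  have hwnorm : wnorm m l = Real.sqrt A := by
    rw [wnorm, ← Real.sqrt_eq_rpow]
    congr 1
    rw [intervalIntegral.integral_of_le zero_le_one]
    simp_rw [intervalIntegral.integral_of_le zero_le_one]
    rw [show ((volume : Measure ℝ).restrict (Ioc (0:ℝ) 1)) = μJ from rfl]
    rw [integral_integral_swap (f := fun x y => Real.exp (-m * (x + y)) * ‖l x y‖ ^ 2) hF]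
    rw [hFt, hA]
  -- a.e. slice integrability
  have hslice : ∀ᵐ t ∂μJ, IntervalIntegrable (fun σ => ‖l σ t‖) volume 0 1 ∧
      Integrable (fun σ => Real.exp (-m * σ) * ‖l σ t‖ ^ 2) μJ := by
    filter_upwards [hm1.prod_left_ae, hm2.prod_left_ae] with t h1t h2t
    constructor
    · rw [intervalIntegrable_iff_integrableOn_Ioc_of_le zero_le_one]; exact h1t
    · refine h2t.mono' (((Real.continuous_exp.comp
        (continuous_const.mul continuous_id)).aestronglyMeasurable).mul h2t.1) ?_
      rw [hμJ]
      filter_upwards [ae_restrict_mem measurableSet_Ioc] with σ hσ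
      rw [Real.norm_eq_abs, abs_mul, abs_of_pos (Real.exp_pos _), abs_of_nonneg (sq_nonneg _)]
      have hle : Real.exp (-m * σ) ≤ 1 := by
        rw [Real.exp_le_one_iff]; nlinarith [hσ.1]
      nlinarith [sq_nonneg ‖l σ t‖, Real.exp_pos (-m * σ)]
  -- integrability of h1 and √h1
  have hh1m : AEStronglyMeasurable h1 μJ := by
    have h' : AEStronglyMeasurable (fun t => Real.exp (m * t) * (Real.exp (-m * t) * h1 t)) μJ :=
      ((Real.continuous_exp.comp (continuous_const.mul continuous_id)).aestronglyMeasurable).mul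
        hAint.1
    refine h'.congr (Filter.Eventually.of_forall fun t => ?_)
    show Real.exp (m * t) * (Real.exp (-m * t) * h1 t) = h1 t
    rw [← mul_assoc, ← Real.exp_add, show m * t + -m * t = 0 by ring, Real.exp_zero, one_mul]
  have hh1_int : Integrable h1 μJ := by
    refine (hAint.const_mul (Real.exp m)).mono' hh1m ?_
    rw [hμJ]
    filter_upwards [ae_restrict_mem measurableSet_Ioc] with t ht
    rw [Real.norm_eq_abs, abs_of_nonneg (hh1nn t)]
    have h2 : h1 t = Real.exp (m * t) * (Real.exp (-m * t) * h1 t) := by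
      rw [← mul_assoc, ← Real.exp_add, show m * t + -m * t = 0 by ring, Real.exp_zero, one_mul]
    calc h1 t = Real.exp (m * t) * (Real.exp (-m * t) * h1 t) := h2
      _ ≤ Real.exp m * (Real.exp (-m * t) * h1 t) := by
          apply mul_le_mul_of_nonneg_right _ (mul_nonneg (Real.exp_pos _).le (hh1nn t))
          exact Real.exp_le_exp.2 (by nlinarith [ht.2])
  have hsqrt_int : Integrable (fun t => Real.sqrt (h1 t)) μJ := by
    refine ((integrable_const (1:ℝ)).add hh1_int).mono'
      (Real.continuous_sqrt.comp_aestronglyMeasurable hh1m) ?_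
    refine Filter.Eventually.of_forall fun t => ?_
    rw [Real.norm_eq_abs, abs_of_nonneg (Real.sqrt_nonneg _)]
    exact sqrt_le_one_add _ (hh1nn t)
  -- square identities
  have hsqf : ∀ σ : ℝ, (Real.exp (m * σ / 2)) ^ 2 = Real.exp (m * σ) := fun σ => by
    rw [sq, ← Real.exp_add]; congr 1; ring
  -- key pointwise bound
  have key : ∀ x ∈ Icc (0:ℝ) 1, ∀ y ∈ Icc (0:ℝ) 1,
      w2 x y ≤ Real.sqrt (Real.exp (m * x) / m) *
        (Real.sqrt (Real.exp (m * y) / m) * Real.sqrt A) := by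
    rintro x ⟨hx0, hx1⟩ y ⟨hy0, hy1⟩
    set gx : ℝ → ℝ := fun t => ∫ σ in Ioc (0:ℝ) x, ‖l σ t‖ with hgxdef
    have hsub_x : Ioc (0:ℝ) x ⊆ Ioc (0:ℝ) 1 := Ioc_subset_Ioc le_rfl hx1
    have hsub_y : Ioc (0:ℝ) y ⊆ Ioc (0:ℝ) 1 := Ioc_subset_Ioc le_rfl hy1
    have hμx_le : volume.restrict (Ioc (0:ℝ) x) ≤ μJ := by
      rw [hμJ]; exact Measure.restrict_mono hsub_x le_rfl
    have hμy_le : volume.restrict (Ioc (0:ℝ) y) ≤ μJ := by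
      rw [hμJ]; exact Measure.restrict_mono hsub_y le_rfl
    have hgx_nn : ∀ t, 0 ≤ gx t := fun t => integral_nonneg fun σ => norm_nonneg _
    have hm1x : Integrable (fun p : ℝ × ℝ => ‖l p.1 p.2‖)
        ((volume.restrict (Ioc (0:ℝ) x)).prod μJ) := by
      refine hm1.mono_measure ?_
      rw [hμJ, Measure.prod_restrict, Measure.prod_restrict]
      exact Measure.restrict_mono (prod_mono hsub_x (subset_refl _)) le_rfl
    have hgx_int : Integrable gx μJ := hm1x.integral_prod_right
    -- Cauchy–Schwarz bound for gx
    have hgx_bound : ∀ᵐ t ∂μJ, gx t ≤ Real.sqrt (Real.exp (m * x) / m) * Real.sqrt (h1 t) := by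
      filter_upwards [hslice] with t ht
      obtain ⟨ht1, ht2⟩ := ht
      have hgx_eq : gx t = ∫ σ in Ioc (0:ℝ) x,
          (Real.exp (m * σ / 2)) * (Real.exp (-(m * σ) / 2) * ‖l σ t‖) := by
        show (∫ σ in Ioc (0:ℝ) x, ‖l σ t‖)
          = ∫ σ in Ioc (0:ℝ) x, (Real.exp (m * σ / 2)) * (Real.exp (-(m * σ) / 2) * ‖l σ t‖)
        congr 1; funext σ
        rw [← mul_assoc, ← Real.exp_add, show m * σ / 2 + -(m * σ) / 2 = 0 by ring,
          Real.exp_zero, one_mul]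
      have hf2 : Integrable (fun σ => (Real.exp (m * σ / 2)) ^ 2)
          (volume.restrict (Ioc (0:ℝ) x)) := by
        simp_rw [hsqf]
        exact (Real.continuous_exp.comp (continuous_const.mul continuous_id)).integrableOn_Ioc
      have hsqg : ∀ σ : ℝ, (Real.exp (-(m * σ) / 2) * ‖l σ t‖) ^ 2
          = Real.exp (-m * σ) * ‖l σ t‖ ^ 2 := fun σ => by
        rw [mul_pow]; congr 1
        rw [sq, ← Real.exp_add]; congr 1; ring
      have hg2 : Integrable (fun σ => (Real.exp (-(m * σ) / 2) * ‖l σ t‖) ^ 2)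
          (volume.restrict (Ioc (0:ℝ) x)) := by
        simp_rw [hsqg]
        exact IntegrableOn.mono_set ht2 hsub_x
      have hcs := cs_aux (μ := volume.restrict (Ioc (0:ℝ) x))
        (f := fun σ => Real.exp (m * σ / 2)) (g := fun σ => Real.exp (-(m * σ) / 2) * ‖l σ t‖)
        (fun σ => (Real.exp_pos _).le)
        (fun σ => mul_nonneg (Real.exp_pos _).le (norm_nonneg _)) hf2 hg2
      rw [← hgx_eq] at hcs
      refine hcs.trans (mul_le_mul ?_ ?_ (Real.sqrt_nonneg _) (Real.sqrt_nonneg _))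
      · apply Real.sqrt_le_sqrt
        calc ∫ σ in Ioc (0:ℝ) x, (Real.exp (m * σ / 2)) ^ 2
            = ∫ σ in Ioc (0:ℝ) x, Real.exp (m * σ) := by simp_rw [hsqf]
          _ ≤ Real.exp (m * x) / m := exp_integral_le hm hx0
      · apply Real.sqrt_le_sqrt
        calc ∫ σ in Ioc (0:ℝ) x, (Real.exp (-(m * σ) / 2) * ‖l σ t‖) ^ 2
            = ∫ σ in Ioc (0:ℝ) x, Real.exp (-m * σ) * ‖l σ t‖ ^ 2 := by simp_rw [hsqg]
          _ ≤ h1 t := by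
              show _ ≤ ∫ σ in Ioc (0:ℝ) 1, Real.exp (-m * σ) * ‖l σ t‖ ^ 2
              exact setIntegral_mono_set ht2
                (Filter.Eventually.of_forall fun σ =>
                  mul_nonneg (Real.exp_pos _).le (sq_nonneg _))
                hsub_x.eventuallyLE
    -- inner integral bound
    have hInner_le : ∀ s ∈ Ioc (0:ℝ) x,
        (∫ t in (0:ℝ)..y, ‖zy s t‖) ≤ ∫ t in Ioc (0:ℝ) y, gx t := by
      intro s hs
      rw [intervalIntegral.integral_of_le hy0]
      refine integral_mono_of_nonneg (Filter.Eventually.of_forall fun t => norm_nonneg _)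
        (hgx_int.mono_measure hμy_le) ?_
      have hae : ∀ᵐ t ∂volume.restrict (Ioc (0:ℝ) y),
          IntervalIntegrable (fun σ => ‖l σ t‖) volume 0 1 ∧
          Integrable (fun σ => Real.exp (-m * σ) * ‖l σ t‖ ^ 2) μJ := by
        rw [hμJ] at hslice
        exact ae_restrict_of_ae_restrict_of_subset hsub_y hslice
      filter_upwards [hae] with t ht
      obtain ⟨ht1, _⟩ := ht
      rw [hzy s t]
      calc ‖∫ σ in (0:ℝ)..s, l σ t‖ ≤ ∫ σ in (0:ℝ)..s, ‖l σ t‖ :=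
          intervalIntegral.norm_integral_le_integral_norm hs.1.le
        _ ≤ ∫ σ in (0:ℝ)..x, ‖l σ t‖ := by
            refine intervalIntegral.integral_mono_interval le_rfl hs.1.le hs.2
              (Filter.Eventually.of_forall fun σ => norm_nonneg _) ?_
            refine ht1.mono_set ?_
            rw [uIcc_of_le hx0, uIcc_of_le zero_le_one]
            exact Icc_subset_Icc le_rfl hx1
        _ = gx t := by rw [intervalIntegral.integral_of_le hx0, hgxdef]
    -- outer integral bound
    have hw2_le : w2 x y ≤ ∫ t in Ioc (0:ℝ) y, gx t := by
      rw [hw2, intervalIntegral.integral_of_le hx0]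
      set C2 := ∫ t in Ioc (0:ℝ) y, gx t with hC2
      have hC2nn : 0 ≤ C2 := integral_nonneg fun t => hgx_nn t
      calc (∫ s in Ioc (0:ℝ) x, ∫ t in (0:ℝ)..y, ‖zy s t‖)
          ≤ ∫ _ in Ioc (0:ℝ) x, C2 := by
            refine integral_mono_of_nonneg (Filter.Eventually.of_forall fun s =>
              intervalIntegral.integral_nonneg hy0 fun t _ => norm_nonneg _)
              (integrableOn_const (by rw [Real.volume_Ioc]; exact ENNReal.ofReal_ne_top))
              ?_
            filter_upwards [ae_restrict_mem measurableSet_Ioc] with s hs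
            exact hInner_le s hs
        _ = (volume (Ioc (0:ℝ) x)).toReal * C2 := by
            rw [setIntegral_const, smul_eq_mul, measureReal_def]
        _ ≤ C2 := by
            rw [Real.volume_Ioc]
            have hxx : (ENNReal.ofReal (x - 0)).toReal = x := by
              rw [ENNReal.toReal_ofReal (by linarith)]; ring
            rw [hxx]
            nlinarith
    -- Cauchy–Schwarz in t
    have hstep2 : (∫ t in Ioc (0:ℝ) y, gx t)
        ≤ Real.sqrt (Real.exp (m * x) / m) * ∫ t in Ioc (0:ℝ) y, Real.sqrt (h1 t) := by
      rw [← integral_const_mul]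
      refine integral_mono_of_nonneg (Filter.Eventually.of_forall hgx_nn)
        ((hsqrt_int.const_mul _).mono_measure hμy_le) ?_
      rw [hμJ] at hgx_bound
      exact ae_restrict_of_ae_restrict_of_subset hsub_y hgx_bound
    have hstep3 : (∫ t in Ioc (0:ℝ) y, Real.sqrt (h1 t))
        ≤ Real.sqrt (Real.exp (m * y) / m) * Real.sqrt A := by
      have hpt : (fun t => Real.sqrt (h1 t))
          = fun t => Real.exp (m * t / 2) * (Real.exp (-(m * t) / 2) * Real.sqrt (h1 t)) := by
        funext t
        rw [← mul_assoc, ← Real.exp_add, show m * t / 2 + -(m * t) / 2 = 0 by ring,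
          Real.exp_zero, one_mul]
      have hf2 : Integrable (fun t => (Real.exp (m * t / 2)) ^ 2)
          (volume.restrict (Ioc (0:ℝ) y)) := by
        simp_rw [hsqf]
        exact (Real.continuous_exp.comp (continuous_const.mul continuous_id)).integrableOn_Ioc
      have hsqg : ∀ t : ℝ, (Real.exp (-(m * t) / 2) * Real.sqrt (h1 t)) ^ 2
          = Real.exp (-m * t) * h1 t := fun t => by
        rw [mul_pow, Real.sq_sqrt (hh1nn t)]; congr 1
        rw [sq, ← Real.exp_add]; congr 1; ring
      have hg2 : Integrable (fun t => (Real.exp (-(m * t) / 2) * Real.sqrt (h1 t)) ^ 2)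
          (volume.restrict (Ioc (0:ℝ) y)) := by
        simp_rw [hsqg]
        exact hAint.mono_measure hμy_le
      have hcs := cs_aux (μ := volume.restrict (Ioc (0:ℝ) y))
        (f := fun t => Real.exp (m * t / 2))
        (g := fun t => Real.exp (-(m * t) / 2) * Real.sqrt (h1 t))
        (fun t => (Real.exp_pos _).le)
        (fun t => mul_nonneg (Real.exp_pos _).le (Real.sqrt_nonneg _)) hf2 hg2
      rw [show (fun t => Real.exp (m * t / 2) * (Real.exp (-(m * t) / 2) * Real.sqrt (h1 t)))
          = fun t => Real.sqrt (h1 t) from hpt.symm] at hcs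
      refine hcs.trans (mul_le_mul ?_ ?_ (Real.sqrt_nonneg _) (Real.sqrt_nonneg _))
      · apply Real.sqrt_le_sqrt
        calc ∫ t in Ioc (0:ℝ) y, (Real.exp (m * t / 2)) ^ 2
            = ∫ t in Ioc (0:ℝ) y, Real.exp (m * t) := by simp_rw [hsqf]
          _ ≤ Real.exp (m * y) / m := exp_integral_le hm hy0
      · apply Real.sqrt_le_sqrt
        calc ∫ t in Ioc (0:ℝ) y, (Real.exp (-(m * t) / 2) * Real.sqrt (h1 t)) ^ 2
            = ∫ t in Ioc (0:ℝ) y, Real.exp (-m * t) * h1 t := by simp_rw [hsqg]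
          _ ≤ A := by
              show _ ≤ ∫ t in Ioc (0:ℝ) 1, Real.exp (-m * t) * h1 t
              exact setIntegral_mono_set hAint
                (Filter.Eventually.of_forall fun t =>
                  mul_nonneg (Real.exp_pos _).le (hh1nn t))
                hsub_y.eventuallyLE
    calc w2 x y ≤ ∫ t in Ioc (0:ℝ) y, gx t := hw2_le
      _ ≤ Real.sqrt (Real.exp (m * x) / m) * ∫ t in Ioc (0:ℝ) y, Real.sqrt (h1 t) := hstep2
      _ ≤ Real.sqrt (Real.exp (m * x) / m) *
          (Real.sqrt (Real.exp (m * y) / m) * Real.sqrt A) :=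
          mul_le_mul_of_nonneg_left hstep3 (Real.sqrt_nonneg _)
  -- nonnegativity of w2 on the square
  have hw2nn : ∀ x ∈ Icc (0:ℝ) 1, ∀ y ∈ Icc (0:ℝ) 1, 0 ≤ w2 x y := by
    intro x hx y hy
    rw [hw2]
    exact intervalIntegral.integral_nonneg hx.1 fun s _ =>
      intervalIntegral.integral_nonneg hy.1 fun t _ => norm_nonneg _
  -- pointwise weighted bound
  have hptw : ∀ x ∈ Icc (0:ℝ) 1, ∀ y ∈ Icc (0:ℝ) 1,
      Real.exp (-m * (x + y)) * |w2 x y| ^ 2 ≤ A / m ^ 2 := by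
    intro x hx y hy
    have h := key x hx y hy
    have h0 := hw2nn x hx y hy
    rw [abs_of_nonneg h0]
    have hsq : w2 x y ^ 2 ≤ (Real.sqrt (Real.exp (m * x) / m) *
        (Real.sqrt (Real.exp (m * y) / m) * Real.sqrt A)) ^ 2 := pow_le_pow_left₀ h0 h 2
    have hrhs : (Real.sqrt (Real.exp (m * x) / m) *
        (Real.sqrt (Real.exp (m * y) / m) * Real.sqrt A)) ^ 2
        = (Real.exp (m * x) / m) * ((Real.exp (m * y) / m) * A) := by
      rw [mul_pow, mul_pow, Real.sq_sqrt (by positivity), Real.sq_sqrt (by positivity),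
        Real.sq_sqrt hApos]
    calc Real.exp (-m * (x + y)) * w2 x y ^ 2
        ≤ Real.exp (-m * (x + y)) * ((Real.exp (m * x) / m) * ((Real.exp (m * y) / m) * A)) :=
          mul_le_mul_of_nonneg_left (hsq.trans_eq hrhs) (Real.exp_pos _).le
      _ = A / m ^ 2 := by
          rw [show -m * (x + y) = -(m * x) + -(m * y) by ring, Real.exp_add, Real.exp_neg,
            Real.exp_neg]
          field_simp
  -- final estimate
  have hinner_nn : ∀ x : ℝ, 0 ≤ ∫ y in (0:ℝ)..1, Real.exp (-m * (x + y)) * |w2 x y| ^ 2 :=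
    fun x => intervalIntegral.integral_nonneg zero_le_one fun y _ => by positivity
  have hS_le : (∫ x in (0:ℝ)..1, ∫ y in (0:ℝ)..1, Real.exp (-m * (x + y)) * |w2 x y| ^ 2)
      ≤ A / m ^ 2 := by
    have hAm : (0:ℝ) ≤ A / m ^ 2 := by positivity
    rw [intervalIntegral.integral_of_le zero_le_one]
    have hconst : Integrable (fun _ : ℝ => A / m ^ 2) μJ := integrable_const _
    calc (∫ x in Ioc (0:ℝ) 1, ∫ y in (0:ℝ)..1, Real.exp (-m * (x + y)) * |w2 x y| ^ 2)
        ≤ ∫ _ in Ioc (0:ℝ) 1, A / m ^ 2 := by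
          refine integral_mono_of_nonneg (Filter.Eventually.of_forall hinner_nn) hconst ?_
          filter_upwards [ae_restrict_mem measurableSet_Ioc] with x hx
          rw [intervalIntegral.integral_of_le zero_le_one]
          calc (∫ y in Ioc (0:ℝ) 1, Real.exp (-m * (x + y)) * |w2 x y| ^ 2)
              ≤ ∫ _ in Ioc (0:ℝ) 1, A / m ^ 2 := by
                refine integral_mono_of_nonneg
                  (Filter.Eventually.of_forall fun y => by positivity) hconst ?_
                filter_upwards [ae_restrict_mem measurableSet_Ioc] with y hy
                exact hptw x (Ioc_subset_Icc_self hx) y (Ioc_subset_Icc_self hy)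
            _ = A / m ^ 2 := by
                rw [setIntegral_const, smul_eq_mul, measureReal_def, Real.volume_Ioc]
                norm_num
      _ = A / m ^ 2 := by
          rw [setIntegral_const, smul_eq_mul, measureReal_def, Real.volume_Ioc]
          norm_num
  have hS_nn : (0:ℝ) ≤ ∫ x in (0:ℝ)..1, ∫ y in (0:ℝ)..1,
      Real.exp (-m * (x + y)) * |w2 x y| ^ 2 :=
    intervalIntegral.integral_nonneg zero_le_one fun x _ => hinner_nn x
  have hfinal : wnormR m w2 ≤ (A / m ^ 2) ^ ((1:ℝ)/2) := by
    rw [wnormR]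
    exact Real.rpow_le_rpow hS_nn hS_le (by norm_num)
  have heq : (A / m ^ 2) ^ ((1:ℝ)/2) = Real.sqrt A / m := by
    rw [← Real.sqrt_eq_rpow, Real.sqrt_div hApos, Real.sqrt_sq hm.le]
  refine hfinal.trans ?_
  rw [heq, hwnorm]
  rw [div_eq_mul_inv (2:ℝ) m, mul_assoc]
  calc Real.sqrt A / m = m⁻¹ * Real.sqrt A := by ring
    _ ≤ 2 * (m⁻¹ * Real.sqrt A) := by
        nlinarith [Real.sqrt_nonneg A, inv_pos.2 hm]
end
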